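/- arXiv:2308.09888 — 3 statements merged into one kernel-verified Lean document; each statement's English description precedes it below -/
import Mathlib

section
/- Let Û^M_srNMC(λ) = (1/M) Σ_{i=1}^M log[ l(y^(i)|θ^(i),λ) / ((1/M) Σ_{j=1}^M l(y^(i)|θ^(j),λ)) ], where θ^(i) ~ π_θ i.i.d., ε^(i) ~ π_ε i.i.d., and y^(i) = g(θ^(i),ε^(i),λ). Then E[Û^M_srNMC(λ)] ≤ U(λ) for every M > 0, where U(λ) is the expected information gain. -/
open MeasureTheory Real
open scoped ENNReal

lemma lintegral_pi_fin_prod {E : Type*} [MeasurableSpace E] (μ : Measure E) [SigmaFinite μ] :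
    ∀ {n : ℕ} (f : Fin n → E → ℝ≥0∞), (∀ i, Measurable (f i)) →
      ∫⁻ x : Fin n → E, ∏ i, f i (x i) ∂(Measure.pi fun _ => μ) = ∏ i, ∫⁻ y, f i y ∂μ := by
  intro n
  induction n with
  | zero =>
      intro f _
      simp [lintegral_const]
  | succ n ih =>
      intro f hf
      rw [← ((measurePreserving_piFinSuccAbove (fun _ : Fin (n+1) => μ) 0).symm).lintegral_comp
        (by measurability)]
      simp only [MeasurableEquiv.piFinSuccAbove_symm_apply]
      simp_rw [Fin.insertNthEquiv, Equiv.coe_fn_mk, Fin.prod_univ_succ, Fin.insertNth_zero]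
      simp only [Fin.cons_zero, Fin.cons_succ, cast_eq]
      rw [← ih (fun j => f j.succ) (fun j => hf j.succ)]
      exact lintegral_prod_mul (μ := μ) (ν := Measure.pi fun _ : Fin n => μ) (f := f 0)
        (g := fun v : Fin n → E => ∏ j, f j.succ (v j))
        ((hf 0).aemeasurable)
        ((Finset.measurable_prod _ fun j _ => (hf j.succ).comp (measurable_pi_apply j)).aemeasurable)

/-- Theorem 2 (part 1): the expectation of the srNMC estimator
`Û^M_srNMC(λ) = (1/M) Σᵢ log[ l(yⁱ|θⁱ,λ) / ((1/M) Σⱼ l(yⁱ|θʲ,λ)) ]`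
is a lower bound on the expected information gain `U(λ)` for every `M > 0`.
The `M` samples `(θⁱ, yⁱ)` are i.i.d. from the joint of parameter and observation:
`θⁱ ~ π_θ` and `yⁱ` has conditional density `l(·|θⁱ,λ)` w.r.t. a dominating
measure `ν` (the sampling path `yⁱ = g(θⁱ,εⁱ,λ)`), so the joint law has density
`z ↦ l(z.2|z.1,λ)` w.r.t. `Pθ ⊗ ν`, and
`U(λ) = E[log (l(y|θ,λ)/p(y|λ))]` with marginal `p(y|λ) = ∫ π_θ(θ') l(y|θ',λ) dθ'`. -/
theorem srNMC_expectation_lower_bound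
    {Θ Y : Type*} [MeasurableSpace Θ] [MeasurableSpace Y]
    (Pθ : Measure Θ) [IsProbabilityMeasure Pθ]
    (ν : Measure Y) [SigmaFinite ν]
    (l : Y → Θ → ℝ)
    (hml : Measurable fun z : Θ × Y => l z.2 z.1)
    (hl : ∀ y θ, 0 < l y θ)
    -- `l(·|θ,λ)` is a probability density w.r.t. `ν` for every `θ`
    (hnorm : ∀ θ, ∫ y, l y θ ∂ν = 1)
    (M : ℕ) (hM : 0 < M)
    -- integrability (all expectations are finite)
    (hIntU : Integrable
      (fun z : Θ × Y => l z.2 z.1 * Real.log (l z.2 z.1 / ∫ θ', l z.2 θ' ∂Pθ))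
      (Pθ.prod ν))
    (hIntE : Integrable
      (fun w : Fin M → Θ × Y => (∏ i, l (w i).2 (w i).1) *
        ((M : ℝ)⁻¹ * ∑ i, Real.log (l (w i).2 (w i).1 /
          ((M : ℝ)⁻¹ * ∑ j, l (w i).2 (w j).1))))
      (Measure.pi fun _ : Fin M => Pθ.prod ν)) :
    (∫ w : Fin M → Θ × Y, (∏ i, l (w i).2 (w i).1) *
        ((M : ℝ)⁻¹ * ∑ i, Real.log (l (w i).2 (w i).1 /
          ((M : ℝ)⁻¹ * ∑ j, l (w i).2 (w j).1)))
        ∂(Measure.pi fun _ : Fin M => Pθ.prod ν)) ≤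
      ∫ z : Θ × Y, l z.2 z.1 * Real.log (l z.2 z.1 / ∫ θ', l z.2 θ' ∂Pθ)
        ∂(Pθ.prod ν) := by
  letI : MeasureSpace Θ := ⟨Pθ⟩
  letI : MeasureSpace Y := ⟨ν⟩
  haveI : SigmaFinite (volume : Measure Θ) := (inferInstance : SigmaFinite Pθ)
  haveI : SigmaFinite (volume : Measure Y) := (inferInstance : SigmaFinite ν)
  set μ1 : Measure (Θ × Y) := Pθ.prod ν with hμ1
  set μ : Measure (Fin M → Θ × Y) := Measure.pi fun _ : Fin M => μ1 with hμdef
  haveI : SigmaFinite μ1 := by rw [hμ1]; infer_instance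
  set p : Y → ℝ := fun y => ∫ θ', l y θ' ∂Pθ with hpdef
  have hp : ∀ y, (∫ θ', l y θ' ∂Pθ) = p y := fun _ => rfl
  simp_rw [hp]
  -- basic measurability
  have hmly : ∀ θ, Measurable fun y => l y θ := by
    intro θ
    exact hml.comp measurable_prodMk_left
  have hmlθ : ∀ y, Measurable fun θ => l y θ := by
    intro y
    exact hml.comp measurable_prodMk_right
  have hpm : Measurable p := by
    rw [hpdef]
    have : Measurable fun z : Y × Θ => l z.1 z.2 := hml.comp measurable_swap
    exact (this.stronglyMeasurable.integral_prod_right').measurable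
  -- `l(·|θ)` is an integrable probability density
  have hlint1 : ∀ θ, Integrable (fun y => l y θ) ν := by
    intro θ
    by_contra h
    have h1 := hnorm θ
    rw [integral_undef h] at h1
    exact one_ne_zero h1.symm
  have hLone : ∀ θ, ∫⁻ y, ENNReal.ofReal (l y θ) ∂ν = 1 := by
    intro θ
    rw [← ofReal_integral_eq_lintegral_ofReal (hlint1 θ) (ae_of_all _ fun y => (hl y θ).le),
      hnorm θ, ENNReal.ofReal_one]
  have hpνone : ∫⁻ y, ∫⁻ θ, ENNReal.ofReal (l y θ) ∂Pθ ∂ν = 1 := by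
    rw [← lintegral_lintegral_swap (hml.ennreal_ofReal.aemeasurable)]
    simp [hLone]
  have hple : ∀ y, ENNReal.ofReal (p y) ≤ ∫⁻ θ, ENNReal.ofReal (l y θ) ∂Pθ := by
    intro y
    by_cases hIy : Integrable (fun θ => l y θ) Pθ
    · rw [hpdef]
      exact le_of_eq
        (ofReal_integral_eq_lintegral_ofReal hIy (ae_of_all _ fun θ => (hl y θ).le))
    · simp [hpdef, integral_undef hIy]
  have hpnn : ∀ y, 0 ≤ p y := fun y => integral_nonneg fun θ => (hl y θ).le
  -- the joint density integrates to 1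
  have hjoint_int : Integrable (fun z : Θ × Y => l z.2 z.1) μ1 := by
    rw [hμ1]
    refine (integrable_prod_iff hml.aestronglyMeasurable).2 ⟨ae_of_all _ fun θ => hlint1 θ, ?_⟩
    have : (fun θ => ∫ y, ‖l y θ‖ ∂ν) = fun _ : Θ => (1 : ℝ) := by
      funext θ
      rw [← hnorm θ]
      exact integral_congr_ae (ae_of_all _ fun y => norm_of_nonneg (hl y θ).le)
    rw [this]
    exact integrable_const _
  have hjoint_one : ∫ z : Θ × Y, l z.2 z.1 ∂μ1 = 1 := by
    rw [hμ1] at hjoint_int ⊢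
    rw [integral_prod _ hjoint_int]
    simp [hnorm]
  -- a.e. positivity of the marginal density p
  have hpae : ∀ᵐ y ∂ν, 0 < p y := by
    have hmq : Measurable fun y => ∫⁻ θ, ENNReal.ofReal (l y θ) ∂Pθ :=
      Measurable.lintegral_prod_right' ((hml.comp measurable_swap).ennreal_ofReal)
    have hfin : ∀ᵐ y ∂ν, (∫⁻ θ, ENNReal.ofReal (l y θ) ∂Pθ) < ⊤ :=
      ae_lt_top hmq (by rw [hpνone]; exact ENNReal.one_ne_top)
    filter_upwards [hfin] with y hy
    have hInt : Integrable (fun θ => l y θ) Pθ := by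
      refine ⟨(hmlθ y).aestronglyMeasurable, ?_⟩
      rw [hasFiniteIntegral_iff_ofReal (ae_of_all _ fun θ => (hl y θ).le)]
      exact hy
    have hpos : 0 < ∫⁻ θ, ENNReal.ofReal (l y θ) ∂Pθ := by
      rw [lintegral_pos_iff_support ((hmlθ y).ennreal_ofReal)]
      have : Function.support (fun θ => ENNReal.ofReal (l y θ)) = Set.univ := by
        ext θ
        simp [Function.support, (ENNReal.ofReal_pos.2 (hl y θ)).ne', hl y θ]
      rw [this]
      simp
    have hpy : p y = (∫⁻ θ, ENNReal.ofReal (l y θ) ∂Pθ).toReal := by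
      rw [hpdef]
      exact integral_eq_lintegral_of_nonneg_ae (ae_of_all _ fun θ => (hl y θ).le)
        (hmlθ y).aestronglyMeasurable
    rw [hpy]
    exact ENNReal.toReal_pos hpos.ne' hy.ne
  have hgood : ∀ᵐ w : Fin M → Θ × Y ∂μ, ∀ i, 0 < p ((w i).2) := by
    rw [ae_all_iff]
    intro i
    rw [ae_iff]
    have hB : ν {y | ¬ 0 < p y} = 0 := by
      have := hpae
      rw [ae_iff] at this
      exact this
    have hz : μ1 {z : Θ × Y | ¬ 0 < p z.2} = 0 := by
      have hset : {z : Θ × Y | ¬ 0 < p z.2} = Set.univ ×ˢ {y | ¬ 0 < p y} := by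
        ext z; simp
      rw [hμ1, hset, Measure.prod_prod, hB, mul_zero]
    have hset2 : {w : Fin M → Θ × Y | ¬ 0 < p ((w i).2)} =
        Function.eval i ⁻¹' {z : Θ × Y | ¬ 0 < p z.2} := rfl
    rw [hset2, hμdef]
    exact Measure.pi_eval_preimage_null _ hz
  -- convenient notation
  have hMne : (M : ℝ) ≠ 0 := Nat.cast_ne_zero.2 hM.ne'
  have hMinv : (0:ℝ) < (M : ℝ)⁻¹ := by positivity
  set U : ℝ := ∫ z : Θ × Y, l z.2 z.1 * Real.log (l z.2 z.1 / p z.2) ∂μ1 with hUdef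
  set fG : Fin M → Fin M → Θ × Y → ℝ := fun i k z =>
    if k = i then l z.2 z.1 * Real.log (l z.2 z.1 / p z.2) else l z.2 z.1 with hfGdef
  have hfGint : ∀ i k, Integrable (fG i k) μ1 := by
    intro i k
    by_cases hk : k = i
    · subst hk
      simpa [hfGdef, hpdef] using hIntU
    · simpa [hfGdef, hk] using hjoint_int
  have hμvol : μ = (volume : Measure (Fin M → Θ × Y)) := rfl
  have hμ1vol : μ1 = (volume : Measure (Θ × Y)) := rfl
  have hGint : ∀ i, Integrable (fun w : Fin M → Θ × Y => ∏ k, fG i k (w k)) μ := by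
    intro i
    rw [hμvol]
    exact Integrable.fintype_prod (f := fG i) fun k => (hμ1vol ▸ hfGint i k)
  have hGval : ∀ i, ∫ w : Fin M → Θ × Y, ∏ k, fG i k (w k) ∂μ = U := by
    intro i
    rw [hμvol]
    erw [integral_fintype_prod_eq_prod (fun k => fG i k)]
    rw [Finset.prod_eq_single i]
    · simp only [hfGdef, if_pos rfl]
      rw [hUdef, hμ1vol]
    · intro k _ hk
      have : ∫ z : Θ × Y, fG i k z = ∫ z : Θ × Y, l z.2 z.1 ∂μ1 := by
        rw [hμ1vol]
        exact integral_congr_ae (ae_of_all _ fun z => by simp [hfGdef, hk])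
      rw [this, hjoint_one]
    · intro h
      exact absurd (Finset.mem_univ i) h
  -- ρ, the joint density of all samples
  have hρint : Integrable (fun w : Fin M → Θ × Y => ∏ k, l (w k).2 (w k).1) μ := by
    rw [hμvol]
    exact Integrable.fintype_prod (f := fun _ (z : Θ × Y) => l z.2 z.1) fun k => (hμ1vol ▸ hjoint_int)
  have hρone : ∫ w : Fin M → Θ × Y, ∏ k, l (w k).2 (w k).1 ∂μ = 1 := by
    rw [hμvol]
    erw [integral_fintype_prod_eq_prod (fun _ (z : Θ × Y) => l z.2 z.1)]
    simp [← hμ1vol, hjoint_one]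
  have hρpos : ∀ w : Fin M → Θ × Y, 0 < ∏ k, l (w k).2 (w k).1 :=
    fun w => Finset.prod_pos fun k _ => hl _ _
  have hSpos : ∀ (w : Fin M → Θ × Y) (i : Fin M),
      0 < (M : ℝ)⁻¹ * ∑ j, l (w i).2 (w j).1 := by
    intro w i
    refine mul_pos hMinv (Finset.sum_pos (fun j _ => hl _ _) ?_)
    exact ⟨⟨0, hM⟩, Finset.mem_univ _⟩
  -- expansion of the product defining G
  have hGw : ∀ (i : Fin M) (w : Fin M → Θ × Y), (∏ k, fG i k (w k)) =
      (∏ k, l (w k).2 (w k).1) * Real.log (l (w i).2 (w i).1 / p ((w i).2)) := by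
    intro i w
    rw [← Finset.prod_erase_mul _ _ (Finset.mem_univ i),
      ← Finset.prod_erase_mul (f := fun k => l (w k).2 (w k).1) _ (Finset.mem_univ i)]
    have he : ∏ k ∈ Finset.univ.erase i, fG i k (w k) =
        ∏ k ∈ Finset.univ.erase i, l (w k).2 (w k).1 :=
      Finset.prod_congr rfl fun k hk => by simp [hfGdef, Finset.ne_of_mem_erase hk]
    rw [he]
    simp only [hfGdef, if_pos rfl]
    ring
  -- H, the correction term
  set H : (Fin M → Θ × Y) → ℝ := fun w => (∏ k, l (w k).2 (w k).1) *
      ((M : ℝ)⁻¹ * ∑ i, p ((w i).2) / ((M : ℝ)⁻¹ * ∑ j, l (w i).2 (w j).1)) with hHdef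
  have hHnn : ∀ w, 0 ≤ H w := by
    intro w
    refine mul_nonneg (hρpos w).le (mul_nonneg hMinv.le (Finset.sum_nonneg fun i _ => ?_))
    exact div_nonneg (hpnn _) (hSpos w i).le
  have hHmeas : Measurable H := by
    rw [hHdef]
    refine Measurable.mul ?_ (Measurable.const_mul ?_ _)
    · exact Finset.measurable_prod _ fun k _ =>
        hml.comp (measurable_pi_apply k)
    · refine Finset.measurable_sum _ fun i _ => Measurable.div ?_ ?_
      · exact hpm.comp ((measurable_pi_apply i).snd)
      · exact Measurable.const_mul (Finset.measurable_sum _ fun j _ =>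
          hml.comp (((measurable_pi_apply j).fst).prodMk ((measurable_pi_apply i).snd))) _
  have hHkey : ∫⁻ w, ENNReal.ofReal (H w) ∂μ ≤ 1 := by
    have hmp := measurePreserving_arrowProdEquivProdArrow Θ Y (Fin M)
      (fun _ => Pθ) (fun _ => ν)
    set e := MeasurableEquiv.arrowProdEquivProdArrow Θ Y (Fin M) with hedef
    set g : (Fin M → Θ) × (Fin M → Y) → ℝ≥0∞ := fun q =>
      ENNReal.ofReal ((∏ k, l (q.2 k) (q.1 k)) *
        ((M : ℝ)⁻¹ * ∑ i, p (q.2 i) / ((M : ℝ)⁻¹ * ∑ j, l (q.2 i) (q.1 j)))) with hgdef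
    have hlq : ∀ i j : Fin M, Measurable fun q : (Fin M → Θ) × (Fin M → Y) =>
        l (q.2 i) (q.1 j) := by
      intro i j
      have m1 : Measurable fun q : (Fin M → Θ) × (Fin M → Y) => ((q.1 j, q.2 i) : Θ × Y) :=
        ((measurable_pi_apply j).comp measurable_fst).prodMk
          ((measurable_pi_apply i).comp measurable_snd)
      exact hml.comp m1
    have hgmeas : Measurable g := by
      rw [hgdef]
      refine Measurable.ennreal_ofReal (Measurable.mul ?_ (Measurable.const_mul ?_ _))
      · exact Finset.measurable_prod _ fun k _ => hlq k k
      · refine Finset.measurable_sum _ fun i _ => Measurable.div ?_ ?_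
        · exact hpm.comp ((measurable_pi_apply i).comp measurable_snd)
        · exact Measurable.const_mul (Finset.measurable_sum _ fun j _ => hlq i j) _
    have hcomp : ∀ w, ENNReal.ofReal (H w) = g (e w) := by
      intro w
      rfl
    have htrans : ∫⁻ w, ENNReal.ofReal (H w) ∂μ =
        ∫⁻ q, g q ∂((Measure.pi fun _ : Fin M => Pθ).prod (Measure.pi fun _ : Fin M => ν)) := by
      rw [hμdef, hμ1]
      calc ∫⁻ w, ENNReal.ofReal (H w) ∂(Measure.pi fun _ : Fin M => Pθ.prod ν) =
          ∫⁻ w, g (e w) ∂(Measure.pi fun _ : Fin M => Pθ.prod ν) := by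
            exact lintegral_congr hcomp
        _ = _ := hmp.lintegral_comp hgmeas
    rw [htrans, lintegral_prod _ hgmeas.aemeasurable]
    have hinner : ∀ a : Fin M → Θ,
        ∫⁻ b, g (a, b) ∂(Measure.pi fun _ : Fin M => ν) ≤ 1 := by
      intro a
      have hspos : ∀ y, 0 < (M : ℝ)⁻¹ * ∑ j, l y (a j) := by
        intro y
        refine mul_pos hMinv (Finset.sum_pos (fun j _ => hl _ _) ?_)
        exact ⟨⟨0, hM⟩, Finset.mem_univ _⟩
      set gg : Fin M → Fin M → Y → ℝ≥0∞ := fun i k y =>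
        if k = i then ENNReal.ofReal (l y (a k)) *
          (ENNReal.ofReal ((M : ℝ)⁻¹) *
            (ENNReal.ofReal (p y) / ENNReal.ofReal ((M : ℝ)⁻¹ * ∑ j, l y (a j))))
        else ENNReal.ofReal (l y (a k)) with hggdef
      have hggmeas : ∀ i k, Measurable (gg i k) := by
        intro i k
        rw [hggdef]
        refine Measurable.ite (MeasurableSet.const _) ?_ ?_
        · refine Measurable.mul ((hmly (a k)).ennreal_ofReal) (Measurable.const_mul ?_ _)
          exact Measurable.div (hpm.ennreal_ofReal)
            ((Measurable.const_mul (Finset.measurable_sum _ fun j _ => hmly (a j)) _).ennreal_ofReal)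
        · exact (hmly (a k)).ennreal_ofReal
      have hexp : ∀ b : Fin M → Y, g (a, b) = ∑ i, ∏ k, gg i k (b k) := by
        intro b
        have hprod : ∀ i : Fin M, (∏ k, gg i k (b k)) =
            (∏ k, ENNReal.ofReal (l (b k) (a k))) *
            (ENNReal.ofReal ((M : ℝ)⁻¹) *
              (ENNReal.ofReal (p (b i)) / ENNReal.ofReal ((M : ℝ)⁻¹ * ∑ j, l (b i) (a j)))) := by
          intro i
          rw [← Finset.prod_erase_mul _ _ (Finset.mem_univ i),
            ← Finset.prod_erase_mul (f := fun k => ENNReal.ofReal (l (b k) (a k))) _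
              (Finset.mem_univ i)]
          have he : ∏ k ∈ Finset.univ.erase i, gg i k (b k) =
              ∏ k ∈ Finset.univ.erase i, ENNReal.ofReal (l (b k) (a k)) :=
            Finset.prod_congr rfl fun k hk => by simp [hggdef, Finset.ne_of_mem_erase hk]
          rw [he]
          simp only [hggdef, if_pos rfl]
          ring
        simp_rw [hprod]
        rw [← Finset.mul_sum, hgdef]
        simp only []
        rw [ENNReal.ofReal_mul (Finset.prod_nonneg fun k _ => (hl _ _).le),
          ENNReal.ofReal_mul hMinv.le,
          ENNReal.ofReal_prod_of_nonneg (fun k _ => (hl _ _).le),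
          ENNReal.ofReal_sum_of_nonneg (fun i _ => div_nonneg (hpnn _) (hspos (b i)).le)]
        rw [Finset.mul_sum]
        congr 1
        refine Finset.sum_congr rfl fun i _ => ?_
        rw [ENNReal.ofReal_div_of_pos (hspos (b i))]
      calc ∫⁻ b, g (a, b) ∂(Measure.pi fun _ : Fin M => ν) =
          ∑ i, ∫⁻ b, ∏ k, gg i k (b k) ∂(Measure.pi fun _ : Fin M => ν) := by
            rw [lintegral_congr hexp]
            exact lintegral_finset_sum _ fun i _ =>
              Finset.measurable_prod _ fun k _ => (hggmeas i k).comp (measurable_pi_apply k)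
        _ = ∑ i, ∫⁻ y, gg i i y ∂ν := by
            refine Finset.sum_congr rfl fun i _ => ?_
            rw [lintegral_pi_fin_prod ν (gg i) (hggmeas i)]
            refine Finset.prod_eq_single i (fun k _ hk => ?_) (fun h => absurd (Finset.mem_univ i) h)
            have : ∀ y, gg i k y = ENNReal.ofReal (l y (a k)) := fun y => by
              simp [hggdef, hk]
            rw [lintegral_congr this, hLone]
        _ = ∫⁻ y, ∑ i, gg i i y ∂ν := (lintegral_finset_sum _ fun i _ => hggmeas i i).symm
        _ = ∫⁻ y, ENNReal.ofReal (p y) ∂ν := by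
            refine lintegral_congr fun y => ?_
            have hsum : ∑ i, gg i i y = (∑ i, ENNReal.ofReal (l y (a i))) *
                (ENNReal.ofReal ((M : ℝ)⁻¹) *
                  (ENNReal.ofReal (p y) / ENNReal.ofReal ((M : ℝ)⁻¹ * ∑ j, l y (a j)))) := by
              rw [Finset.sum_mul]
              exact Finset.sum_congr rfl fun i _ => by simp [hggdef]
            rw [hsum, ← ENNReal.ofReal_sum_of_nonneg (fun i _ => (hl _ _).le), ← mul_assoc,
              mul_comm (ENNReal.ofReal (∑ i, l y (a i))) (ENNReal.ofReal ((M : ℝ)⁻¹)),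
              ← ENNReal.ofReal_mul hMinv.le]
            exact ENNReal.mul_div_cancel (ne_of_gt (ENNReal.ofReal_pos.2 (hspos y)))
              ENNReal.ofReal_ne_top
        _ ≤ ∫⁻ y, ∫⁻ θ, ENNReal.ofReal (l y θ) ∂Pθ ∂ν := lintegral_mono fun y => hple y
        _ = 1 := hpνone
    calc ∫⁻ a, ∫⁻ b, g (a, b) ∂(Measure.pi fun _ : Fin M => ν)
          ∂(Measure.pi fun _ : Fin M => Pθ) ≤
        ∫⁻ _, 1 ∂(Measure.pi fun _ : Fin M => Pθ) := lintegral_mono hinner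
      _ = 1 := by simp
  have hHint : Integrable H μ := by
    refine ⟨hHmeas.aestronglyMeasurable, ?_⟩
    rw [hasFiniteIntegral_iff_ofReal (ae_of_all _ hHnn)]
    exact lt_of_le_of_lt hHkey ENNReal.one_lt_top
  have hHle1 : ∫ w, H w ∂μ ≤ 1 := by
    rw [integral_eq_lintegral_of_nonneg_ae (ae_of_all _ hHnn) hHmeas.aestronglyMeasurable]
    calc (∫⁻ w, ENNReal.ofReal (H w) ∂μ).toReal ≤ (1 : ℝ≥0∞).toReal :=
          ENNReal.toReal_mono ENNReal.one_ne_top hHkey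
      _ = 1 := by simp
    -- pointwise comparison
  have hDge : ∀ᵐ w ∂μ, (∏ k, l (w k).2 (w k).1) - H w ≤
      ((M : ℝ)⁻¹ * ∑ i, ∏ k, fG i k (w k)) -
      ((∏ i, l (w i).2 (w i).1) *
        ((M : ℝ)⁻¹ * ∑ i, Real.log (l (w i).2 (w i).1 /
          ((M : ℝ)⁻¹ * ∑ j, l (w i).2 (w j).1)))) := by
    filter_upwards [hgood] with w hw
    have key : ∀ i : Fin M, 1 - p ((w i).2) / ((M : ℝ)⁻¹ * ∑ j, l (w i).2 (w j).1) ≤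
        Real.log (l (w i).2 (w i).1 / p ((w i).2)) -
        Real.log (l (w i).2 (w i).1 / ((M : ℝ)⁻¹ * ∑ j, l (w i).2 (w j).1)) := by
      intro i
      have hA : 0 < l (w i).2 (w i).1 := hl _ _
      have hP : 0 < p ((w i).2) := hw i
      have hS : 0 < (M : ℝ)⁻¹ * ∑ j, l (w i).2 (w j).1 := hSpos w i
      have h1 : Real.log (p ((w i).2) / ((M : ℝ)⁻¹ * ∑ j, l (w i).2 (w j).1)) ≤
          p ((w i).2) / ((M : ℝ)⁻¹ * ∑ j, l (w i).2 (w j).1) - 1 :=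
        Real.log_le_sub_one_of_pos (div_pos hP hS)
      rw [Real.log_div hP.ne' hS.ne'] at h1
      rw [Real.log_div hA.ne' hP.ne', Real.log_div hA.ne' hS.ne']
      linarith
    simp_rw [hGw]
    have e1 : (∏ k, l (w k).2 (w k).1) - H w =
        (∏ k, l (w k).2 (w k).1) * ((M : ℝ)⁻¹ *
          ∑ i, (1 - p ((w i).2) / ((M : ℝ)⁻¹ * ∑ j, l (w i).2 (w j).1))) := by
      rw [hHdef, Finset.sum_sub_distrib, Finset.sum_const, Finset.card_univ, Fintype.card_fin,
        nsmul_eq_mul, mul_one]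
      field_simp
    rw [e1]
    have e2 : (M : ℝ)⁻¹ * (∑ i, (∏ k, l (w k).2 (w k).1) *
          Real.log (l (w i).2 (w i).1 / p ((w i).2))) -
        ((∏ i, l (w i).2 (w i).1) * ((M : ℝ)⁻¹ * ∑ i,
          Real.log (l (w i).2 (w i).1 / ((M : ℝ)⁻¹ * ∑ j, l (w i).2 (w j).1)))) =
        (∏ k, l (w k).2 (w k).1) * ((M : ℝ)⁻¹ *
          ∑ i, (Real.log (l (w i).2 (w i).1 / p ((w i).2)) -
            Real.log (l (w i).2 (w i).1 / ((M : ℝ)⁻¹ * ∑ j, l (w i).2 (w j).1)))) := by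
      rw [← Finset.mul_sum, Finset.sum_sub_distrib]
      ring
    rw [e2]
    have hR : (0:ℝ) ≤ ∏ k, l (w k).2 (w k).1 := (hρpos w).le
    refine mul_le_mul_of_nonneg_left (mul_le_mul_of_nonneg_left ?_ hMinv.le) hR
    exact Finset.sum_le_sum fun i _ => key i
  -- assembling everything
  have hGsum_int : Integrable (fun w => (M : ℝ)⁻¹ * ∑ i, ∏ k, fG i k (w k)) μ :=
    (integrable_finset_sum _ fun i _ => hGint i).const_mul _
  have hGsum_val : ∫ w, ((M : ℝ)⁻¹ * ∑ i, ∏ k, fG i k (w k)) ∂μ = U := by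
    rw [MeasureTheory.integral_const_mul, integral_finset_sum _ fun i _ => hGint i]
    simp only [hGval]
    rw [Finset.sum_const, Finset.card_univ, Fintype.card_fin, nsmul_eq_mul]
    field_simp
  have hρHint : Integrable (fun w : Fin M → Θ × Y =>
      (∏ k, l (w k).2 (w k).1) - H w) μ := by
    exact hρint.sub hHint
  have hD_int : Integrable (fun w : Fin M → Θ × Y =>
      ((M : ℝ)⁻¹ * ∑ i, ∏ k, fG i k (w k)) - ((∏ i, l (w i).2 (w i).1) *
        ((M : ℝ)⁻¹ * ∑ i, Real.log (l (w i).2 (w i).1 /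
          ((M : ℝ)⁻¹ * ∑ j, l (w i).2 (w j).1))))) μ := by
    exact hGsum_int.sub hIntE
  have hmono := integral_mono_ae hρHint hD_int hDge
  have hsub : ∫ w, ((∏ k, l (w k).2 (w k).1) - H w) ∂μ =
      (∫ w, ∏ k, l (w k).2 (w k).1 ∂μ) - ∫ w, H w ∂μ := integral_sub hρint hHint
  rw [hρone] at hsub
  have hfinal : ∫ w, (((M : ℝ)⁻¹ * ∑ i, ∏ k, fG i k (w k)) - ((∏ i, l (w i).2 (w i).1) *
        ((M : ℝ)⁻¹ * ∑ i, Real.log (l (w i).2 (w i).1 /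
          ((M : ℝ)⁻¹ * ∑ j, l (w i).2 (w j).1))))) ∂μ =
      (∫ w, ((M : ℝ)⁻¹ * ∑ i, ∏ k, fG i k (w k)) ∂μ) -
      ∫ w : Fin M → Θ × Y, ((∏ i, l (w i).2 (w i).1) *
        ((M : ℝ)⁻¹ * ∑ i, Real.log (l (w i).2 (w i).1 /
          ((M : ℝ)⁻¹ * ∑ j, l (w i).2 (w j).1)))) ∂μ := integral_sub hGsum_int hIntE
  rw [hGsum_val] at hfinal
  rw [hsub] at hmono
  rw [hfinal] at hmono
  linarith [hHle1, hmono]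
end

section
/- If the likelihood is uniformly bounded: C₁ ≤ l(g(θ,ε,λ)|θ',λ) ≤ C₂ almost surely for positive constants C₁, C₂, then the mean squared error E[(U(λ) − Û^M_srNMC(λ))²] converges to 0 at rate O(1/M) as M → ∞. -/
open MeasureTheory Real


section Aux
variable {α : Type*} [MeasurableSpace α] (μ : Measure α) [SigmaFinite μ]

lemma aux_pi_prod {n : ℕ} (F : Fin n → α → ℝ) :
    ∫ w : Fin n → α, ∏ i, F i (w i) ∂(Measure.pi fun _ : Fin n => μ)
      = ∏ i, ∫ x, F i x ∂μ := by
  letI : MeasureSpace α := ⟨μ⟩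
  exact MeasureTheory.integral_fin_nat_prod_eq_prod F

lemma aux_one {n : ℕ} (L g : α → ℝ) (hL1 : ∫ x, L x ∂μ = 1) (i : Fin n) :
    ∫ w : Fin n → α, (∏ m, L (w m)) * g (w i) ∂(Measure.pi fun _ : Fin n => μ)
      = ∫ x, L x * g x ∂μ := by
  set F : Fin n → α → ℝ := fun m x => if m = i then L x * g x else L x with hF
  have key : ∀ G : Fin n → ℝ, ∏ m, G m = G i * ∏ m ∈ Finset.univ.erase i, G m :=
    fun G => (Finset.mul_prod_erase _ _ (Finset.mem_univ i)).symm
  calc ∫ w : Fin n → α, (∏ m, L (w m)) * g (w i) ∂(Measure.pi fun _ : Fin n => μ)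
      = ∫ w : Fin n → α, ∏ m, F m (w m) ∂(Measure.pi fun _ : Fin n => μ) := by
        refine integral_congr_ae (Filter.Eventually.of_forall fun w => ?_)
        dsimp only
        rw [key (fun m => F m (w m)), key (fun m => L (w m))]
        simp only [hF, if_pos rfl]
        rw [Finset.prod_congr rfl (fun m hm => if_neg (Finset.mem_erase.1 hm).1)]
        ring
    _ = ∏ m, ∫ x, F m x ∂μ := aux_pi_prod μ F
    _ = ∫ x, L x * g x ∂μ := by
        rw [key (fun m => ∫ x, F m x ∂μ)]
        simp only [hF, if_pos rfl]
        rw [Finset.prod_congr rfl (fun m hm => by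
          rw [show (∫ x, (if m = i then L x * g x else L x) ∂μ) = ∫ x, L x ∂μ by
            simp only [if_neg (Finset.mem_erase.1 hm).1], hL1])]
        simp

lemma aux_two {n : ℕ} (L g h : α → ℝ) (hL1 : ∫ x, L x ∂μ = 1) {i j : Fin n}
    (hij : i ≠ j) :
    ∫ w : Fin n → α, (∏ m, L (w m)) * (g (w i) * h (w j))
        ∂(Measure.pi fun _ : Fin n => μ)
      = (∫ x, L x * g x ∂μ) * ∫ x, L x * h x ∂μ := by
  have hji : j ∈ Finset.univ.erase i := Finset.mem_erase.2 ⟨hij.symm, Finset.mem_univ j⟩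
  set F : Fin n → α → ℝ := fun m x =>
    if m = i then L x * g x else if m = j then L x * h x else L x with hF
  have key : ∀ G : Fin n → ℝ,
      ∏ m, G m = G i * (G j * ∏ m ∈ (Finset.univ.erase i).erase j, G m) := by
    intro G
    rw [← Finset.mul_prod_erase Finset.univ _ (Finset.mem_univ i),
        ← Finset.mul_prod_erase _ _ hji]
  have hni : ∀ m ∈ (Finset.univ.erase i).erase j, m ≠ i ∧ m ≠ j := by
    intro m hm
    obtain ⟨hmj, hmi, -⟩ := Finset.mem_erase.1 hm |>.imp id Finset.mem_erase.1
    exact ⟨hmi, hmj⟩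
  calc ∫ w : Fin n → α, (∏ m, L (w m)) * (g (w i) * h (w j))
        ∂(Measure.pi fun _ : Fin n => μ)
      = ∫ w : Fin n → α, ∏ m, F m (w m) ∂(Measure.pi fun _ : Fin n => μ) := by
        refine integral_congr_ae (Filter.Eventually.of_forall fun w => ?_)
        dsimp only
        rw [key (fun m => F m (w m)), key (fun m => L (w m))]
        simp only [hF, if_pos rfl, if_neg hij.symm, if_true]
        have hrest : ∏ x ∈ (Finset.univ.erase i).erase j,
            (if x = i then L (w x) * g (w x) else if x = j then L (w x) * h (w x)
              else L (w x)) = ∏ x ∈ (Finset.univ.erase i).erase j, L (w x) :=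
          Finset.prod_congr rfl (fun m hm => by
            rw [if_neg (hni m hm).1, if_neg (hni m hm).2])
        rw [hrest]
        ring
    _ = ∏ m, ∫ x, F m x ∂μ := aux_pi_prod μ F
    _ = (∫ x, L x * g x ∂μ) * ∫ x, L x * h x ∂μ := by
        rw [key (fun m => ∫ x, F m x ∂μ)]
        simp only [hF, if_pos rfl, if_neg hij.symm, if_true]
        rw [Finset.prod_congr rfl (fun m hm => by
          rw [show (∫ x, (if m = i then L x * g x else if m = j then L x * h x
              else L x) ∂μ) = ∫ x, L x ∂μ by
            simp only [if_neg (hni m hm).1, if_neg (hni m hm).2], hL1])]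
        simp

lemma aux_log_lip {C x y : ℝ} (hC : 0 < C) (hx : C ≤ x) (hy : C ≤ y) :
    (Real.log x - Real.log y) ^ 2 ≤ ((x - y) / C) ^ 2 := by
  have hxp : 0 < x := lt_of_lt_of_le hC hx
  have hyp : 0 < y := lt_of_lt_of_le hC hy
  have habs : |Real.log x - Real.log y| ≤ |x - y| / C := by
    rcases le_total x y with hxy | hxy
    · have h1 : Real.log y - Real.log x = Real.log (y / x) := by
        rw [Real.log_div hyp.ne' hxp.ne']
      have h2 : Real.log (y / x) ≤ y / x - 1 :=
        Real.log_le_sub_one_of_pos (by positivity)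
      have h3 : y / x - 1 = (y - x) / x := by field_simp
      have h4 : (y - x) / x ≤ (y - x) / C :=
        div_le_div_of_nonneg_left (by linarith) hC hx
      rw [abs_sub_comm, abs_of_nonneg (by linarith [Real.log_le_log hxp hxy] :
        (0:ℝ) ≤ Real.log y - Real.log x), abs_sub_comm, abs_of_nonneg (by linarith)]
      calc Real.log y - Real.log x ≤ y / x - 1 := by rw [h1]; exact h2
        _ = (y - x) / x := h3
        _ ≤ (y - x) / C := h4
    · have h1 : Real.log x - Real.log y = Real.log (x / y) := by
        rw [Real.log_div hxp.ne' hyp.ne']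
      have h2 : Real.log (x / y) ≤ x / y - 1 :=
        Real.log_le_sub_one_of_pos (by positivity)
      have h3 : x / y - 1 = (x - y) / y := by field_simp
      have h4 : (x - y) / y ≤ (x - y) / C :=
        div_le_div_of_nonneg_left (by linarith) hC hy
      rw [abs_of_nonneg (by linarith [Real.log_le_log hyp hxy] :
        (0:ℝ) ≤ Real.log x - Real.log y), abs_of_nonneg (by linarith)]
      calc Real.log x - Real.log y ≤ x / y - 1 := by rw [h1]; exact h2
        _ = (x - y) / y := h3
        _ ≤ (x - y) / C := h4
  calc (Real.log x - Real.log y) ^ 2 = |Real.log x - Real.log y| ^ 2 := (sq_abs _).symm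
    _ ≤ (|x - y| / C) ^ 2 := by
        apply pow_le_pow_left₀ (abs_nonneg _) habs
    _ = ((x - y) / C) ^ 2 := by rw [div_pow, div_pow, sq_abs]

lemma aux_intble {β : Type*} [MeasurableSpace β] (μ' : Measure β) [IsFiniteMeasure μ']
    {g : β → ℝ} (hg : Measurable g) (C : ℝ) (hb : ∀ x, |g x| ≤ C) :
    Integrable g μ' :=
  ⟨hg.aestronglyMeasurable, HasFiniteIntegral.of_bounded
    (C := C) (Filter.Eventually.of_forall (by simpa [Real.norm_eq_abs] using hb))⟩
end Aux


section Aux2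
variable {α : Type*} [MeasurableSpace α] (μ : Measure α) [SigmaFinite μ]

lemma aux_pi_prod' {n : ℕ} (F : Fin n → α → ℝ) :
    ∫ w : Fin n → α, ∏ i, F i (w i) ∂(Measure.pi fun _ : Fin n => μ)
      = ∏ i, ∫ x, F i x ∂μ := by
  letI : MeasureSpace α := ⟨μ⟩
  exact MeasureTheory.integral_fin_nat_prod_eq_prod F

lemma aux_split_zero [IsFiniteMeasure μ] (L : α → ℝ) (hLm : Measurable L)
    (hL1 : ∫ x, L x ∂μ = 1)
    (CL : ℝ) (hLb : ∀ x, |L x| ≤ CL)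
    (h : α → α → ℝ) (hhm : Measurable fun p : α × α => h p.1 p.2)
    (Ch : ℝ) (hhb : ∀ z x, |h z x| ≤ Ch)
    (hmean : ∀ z, ∫ x, L x * h z x ∂μ = 0)
    {n : ℕ} {i j k : Fin (n + 1)} (hki : k ≠ i) (hjk : j ≠ k) :
    ∫ w : Fin (n + 1) → α, (∏ m, L (w m)) * (h (w i) (w j) * h (w i) (w k))
      ∂(Measure.pi fun _ => μ) = 0 := by
  classical
  rcases isEmpty_or_nonempty α with hα | hα
  · haveI : IsEmpty (Fin (n + 1) → α) := ⟨fun w => hα.false (w i)⟩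
    simp [integral_of_isEmpty]
  obtain ⟨x₀⟩ := hα
  have hCh : 0 ≤ Ch := (abs_nonneg _).trans (hhb x₀ x₀)
  have hCL : 0 ≤ CL := (abs_nonneg _).trans (hLb x₀)
  obtain ⟨k', hk'⟩ := Fin.exists_succAbove_eq hki
  set G : (Fin (n + 1) → α) → ℝ :=
    fun w => (∏ m, L (w m)) * (h (w i) (w j) * h (w i) (w k)) with hG
  have hco : ∀ a b : Fin (n + 1), Measurable fun w : Fin (n + 1) → α => h (w a) (w b) := by
    intro a b
    exact Measurable.comp' (g := fun p : α × α => h p.1 p.2)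
      (f := fun w : Fin (n + 1) → α => (w a, w b)) hhm
      ((measurable_pi_apply a).prodMk (measurable_pi_apply b))
  have hGm : Measurable G := by
    rw [hG]
    exact (Finset.measurable_prod _ (fun m _ => hLm.comp (measurable_pi_apply m))).mul
      ((hco i j).mul (hco i k))
  have hGb : ∀ w, |G w| ≤ CL ^ (n + 1) * (Ch * Ch) := by
    intro w
    rw [hG, abs_mul, abs_mul]
    have h1 : |∏ m, L (w m)| ≤ CL ^ (n + 1) := by
      rw [Finset.abs_prod]
      calc ∏ m, |L (w m)| ≤ ∏ _m : Fin (n + 1), CL :=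
            Finset.prod_le_prod (fun m _ => abs_nonneg _) (fun m _ => hLb (w m))
        _ = CL ^ (n + 1) := by simp
    exact mul_le_mul h1 (mul_le_mul (hhb _ _) (hhb _ _) (abs_nonneg _) hCh)
      (by positivity) (by positivity)
  have hsymm : ∀ x : α × (Fin n → α),
      (MeasurableEquiv.piFinSuccAbove (fun _ : Fin (n + 1) => α) i).symm x
        = i.insertNth x.1 x.2 := by
    intro x
    simp [MeasurableEquiv.piFinSuccAbove, Fin.insertNthEquiv]
  rw [← ((measurePreserving_piFinSuccAbove (fun _ : Fin (n + 1) => μ) i).symm).integral_comp'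
    (f := (MeasurableEquiv.piFinSuccAbove (fun _ : Fin (n + 1) => α) i).symm) G]
  have hint : Integrable
      (fun x : α × (Fin n → α) =>
        G ((MeasurableEquiv.piFinSuccAbove (fun _ : Fin (n + 1) => α) i).symm x))
      (μ.prod (Measure.pi fun _ : Fin n => μ)) := by
    refine ⟨(hGm.comp (MeasurableEquiv.measurable _)).aestronglyMeasurable, ?_⟩
    exact HasFiniteIntegral.of_bounded (C := CL ^ (n + 1) * (Ch * Ch))
      (Filter.Eventually.of_forall fun x => by
        simpa [Real.norm_eq_abs] using hGb _)
  rw [MeasureTheory.integral_prod _ hint]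
  have hprodL : ∀ (z : α) (v : Fin n → α),
      (∏ m, L (Fin.insertNth (α := fun _ => α) i z v m)) = L z * ∏ m, L (v m) := by
    intro z v
    rw [Fin.prod_univ_succAbove (fun m => L (Fin.insertNth (α := fun _ => α) i z v m)) i]
    simp [Fin.insertNth_apply_same, Fin.insertNth_apply_succAbove]
  have hinner : ∀ z : α,
      (∫ v : Fin n → α,
        G ((MeasurableEquiv.piFinSuccAbove (fun _ : Fin (n + 1) => α) i).symm (z, v))
        ∂(Measure.pi fun _ : Fin n => μ)) = 0 := by
    intro z
    rcases eq_or_ne j i with hji | hji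
    · subst hji
      have hform : ∀ v : Fin n → α,
          G ((MeasurableEquiv.piFinSuccAbove (fun _ : Fin (n + 1) => α) j).symm (z, v))
            = (L z * h z z) * ((∏ m, L (v m)) * h z (v k')) := by
        intro v
        rw [hsymm, hG]
        simp only [hprodL, Fin.insertNth_apply_same, ← hk',
          Fin.insertNth_apply_succAbove]
        ring
      rw [integral_congr_ae (Filter.Eventually.of_forall hform),
        MeasureTheory.integral_const_mul,
        aux_one μ L (fun x => h z x) hL1 k', hmean z, mul_zero]
    · obtain ⟨j', hj'⟩ := Fin.exists_succAbove_eq hji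
      have hj'k' : j' ≠ k' := by
        intro hc; exact hjk (by rw [← hj', ← hk', hc])
      have hform : ∀ v : Fin n → α,
          G ((MeasurableEquiv.piFinSuccAbove (fun _ : Fin (n + 1) => α) i).symm (z, v))
            = L z * ((∏ m, L (v m)) * (h z (v j') * h z (v k'))) := by
        intro v
        rw [hsymm, hG]
        simp only [hprodL, Fin.insertNth_apply_same, ← hk', ← hj',
          Fin.insertNth_apply_succAbove]
        ring
      rw [integral_congr_ae (Filter.Eventually.of_forall hform),
        MeasureTheory.integral_const_mul,
        aux_two μ L (fun x => h z x) (fun x => h z x) hL1 hj'k', hmean z,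
        mul_zero, mul_zero]
  rw [integral_congr_ae (Filter.Eventually.of_forall hinner), integral_zero]

end Aux2

section Aux3
open MeasureTheory Real
variable {α : Type*} [MeasurableSpace α] (μ : Measure α) [IsFiniteMeasure μ]

lemma aux_partA (L f : α → ℝ) (hLm : Measurable L) (hfm : Measurable f)
    (CL Cf : ℝ) (hLb : ∀ x, |L x| ≤ CL) (hfb : ∀ x, |f x| ≤ Cf)
    (hL1 : ∫ x, L x ∂μ = 1) (n : ℕ) :
    ∫ w : Fin (n + 1) → α,
        (∏ m, L (w m)) *
          ((∫ x, L x * f x ∂μ) - (↑(n + 1) : ℝ)⁻¹ * ∑ i, f (w i)) ^ 2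
        ∂(Measure.pi fun _ => μ)
      = ((∫ x, L x * (f x * f x) ∂μ) - (∫ x, L x * f x ∂μ) ^ 2) / (↑(n + 1) : ℝ) := by
  classical
  rcases isEmpty_or_nonempty α with hα | hα
  · haveI : IsEmpty (Fin (n + 1) → α) := ⟨fun w => hα.false (w 0)⟩
    have hμ : μ = 0 := μ.eq_zero_of_isEmpty
    simp [hμ, integral_of_isEmpty]
  obtain ⟨x₀⟩ := hα
  have hCL : 0 ≤ CL := (abs_nonneg _).trans (hLb x₀)
  have hCf : 0 ≤ Cf := (abs_nonneg _).trans (hfb x₀)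
  set U : ℝ := ∫ x, L x * f x ∂μ with hU
  set V : ℝ := ∫ x, L x * (f x * f x) ∂μ with hV
  set c : ℝ := (↑(n + 1) : ℝ)⁻¹ with hc
  set ρ : (Fin (n + 1) → α) → ℝ := fun w => ∏ m, L (w m) with hρ
  have hρm : Measurable ρ := by
    rw [hρ]; exact Finset.measurable_prod _ (fun m _ => hLm.comp (measurable_pi_apply m))
  have hρb : ∀ w, |ρ w| ≤ CL ^ (n + 1) := by
    intro w
    rw [hρ, Finset.abs_prod]
    calc ∏ m, |L (w m)| ≤ ∏ _m : Fin (n + 1), CL :=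
          Finset.prod_le_prod (fun m _ => abs_nonneg _) (fun m _ => hLb (w m))
      _ = CL ^ (n + 1) := by simp
  have hfim : ∀ i : Fin (n + 1), Measurable fun w : Fin (n + 1) → α => f (w i) :=
    fun i => hfm.comp (measurable_pi_apply i)
  have intble : ∀ (g : (Fin (n + 1) → α) → ℝ), Measurable g → ∀ C : ℝ,
      (∀ w, |g w| ≤ C) → Integrable g (Measure.pi fun _ : Fin (n + 1) => μ) :=
    fun g hg C hb => ⟨hg.aestronglyMeasurable, HasFiniteIntegral.of_bounded
      (C := C) (Filter.Eventually.of_forall (by simpa [Real.norm_eq_abs] using hb))⟩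
  have intρ : Integrable ρ (Measure.pi fun _ : Fin (n + 1) => μ) :=
    intble ρ hρm _ hρb
  have intρf : ∀ i, Integrable (fun w => ρ w * f (w i))
      (Measure.pi fun _ : Fin (n + 1) => μ) := by
    intro i
    refine intble _ (hρm.mul (hfim i)) (CL ^ (n + 1) * Cf) fun w => ?_
    rw [abs_mul]
    exact mul_le_mul (hρb w) (hfb _) (abs_nonneg _) (by positivity)
  have intρff : ∀ i j, Integrable (fun w => ρ w * (f (w i) * f (w j)))
      (Measure.pi fun _ : Fin (n + 1) => μ) := by
    intro i j
    refine intble _ (hρm.mul ((hfim i).mul (hfim j))) (CL ^ (n + 1) * (Cf * Cf))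
      fun w => ?_
    rw [abs_mul, abs_mul]
    exact mul_le_mul (hρb w) (mul_le_mul (hfb _) (hfb _) (abs_nonneg _) hCf)
      (by positivity) (by positivity)
  -- pointwise expansion
  have hpt : ∀ w : Fin (n + 1) → α,
      ρ w * (U - c * ∑ i, f (w i)) ^ 2
        = (U ^ 2 * ρ w - (2 * U * c) * ∑ i, ρ w * f (w i))
          + c ^ 2 * ∑ i, ∑ j, ρ w * (f (w i) * f (w j)) := by
    intro w
    have h1 : (∑ i, f (w i)) * (∑ j, f (w j)) = ∑ i, ∑ j, f (w i) * f (w j) :=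
      Finset.sum_mul_sum _ _ _ _
    have h2 : ρ w * ∑ i, f (w i) = ∑ i, ρ w * f (w i) := Finset.mul_sum _ _ _
    have h3 : ρ w * ∑ i, ∑ j, f (w i) * f (w j)
        = ∑ i, ∑ j, ρ w * (f (w i) * f (w j)) := by
      rw [Finset.mul_sum]
      exact Finset.sum_congr rfl fun i _ => Finset.mul_sum _ _ _
    calc ρ w * (U - c * ∑ i, f (w i)) ^ 2
        = U ^ 2 * ρ w - (2 * U * c) * (ρ w * ∑ i, f (w i))
          + c ^ 2 * (ρ w * ((∑ i, f (w i)) * (∑ j, f (w j)))) := by ring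
      _ = _ := by rw [h1, h2, h3]
  rw [integral_congr_ae (Filter.Eventually.of_forall hpt)]
  have int1 : Integrable (fun w => U ^ 2 * ρ w)
      (Measure.pi fun _ : Fin (n + 1) => μ) := intρ.const_mul _
  have int2 : Integrable (fun w => (2 * U * c) * ∑ i, ρ w * f (w i))
      (Measure.pi fun _ : Fin (n + 1) => μ) :=
    (integrable_finset_sum _ fun i _ => intρf i).const_mul _
  have int3 : Integrable (fun w => c ^ 2 * ∑ i, ∑ j, ρ w * (f (w i) * f (w j)))
      (Measure.pi fun _ : Fin (n + 1) => μ) :=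
    (integrable_finset_sum _ fun i _ =>
      integrable_finset_sum _ fun j _ => intρff i j).const_mul _
  have int12 : Integrable
      (fun w => U ^ 2 * ρ w - (2 * U * c) * ∑ i, ρ w * f (w i))
      (Measure.pi fun _ : Fin (n + 1) => μ) := int1.sub int2
  rw [integral_add int12 int3, integral_sub int1 int2,
    integral_const_mul, integral_const_mul, integral_const_mul,
    integral_finset_sum _ (fun i _ => intρf i),
    integral_finset_sum _ (fun i _ =>
      integrable_finset_sum _ fun j _ => intρff i j)]
  -- compute the elementary integrals
  have hEρ : ∫ w, ρ w ∂(Measure.pi fun _ : Fin (n + 1) => μ) = 1 := by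
    have := aux_pi_prod μ (fun _ : Fin (n + 1) => L)
    simpa [hL1] using this
  have hEf : ∀ i, (∫ w, ρ w * f (w i) ∂(Measure.pi fun _ : Fin (n + 1) => μ)) = U :=
    fun i => aux_one μ L f hL1 i
  have hEff : ∀ i j, (∫ w, ρ w * (f (w i) * f (w j))
      ∂(Measure.pi fun _ : Fin (n + 1) => μ)) = if j = i then V else U * U := by
    intro i j
    by_cases hij : j = i
    · subst hij
      simp only [if_pos rfl]
      exact aux_one μ L (fun x => f x * f x) hL1 j
    · rw [if_neg hij]
      exact aux_two μ L f f hL1 (Ne.symm hij)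
  have hswap : ∀ i : Fin (n + 1),
      (∫ w, ∑ j, ρ w * (f (w i) * f (w j)) ∂(Measure.pi fun _ : Fin (n + 1) => μ))
        = ∑ j, ∫ w, ρ w * (f (w i) * f (w j))
            ∂(Measure.pi fun _ : Fin (n + 1) => μ) :=
    fun i => integral_finset_sum _ (fun j _ => intρff i j)
  have hsum2 : ∀ i : Fin (n + 1),
      (∑ j, if j = i then V else U * U) = (↑(n + 1) : ℝ) * (U * U) + (V - U * U) := by
    intro i
    have h5 : ∀ j : Fin (n + 1), (if j = i then V else U * U)
        = U * U + (if j = i then V - U * U else 0) := by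
      intro j; by_cases h : j = i <;> simp [h]
    rw [Finset.sum_congr rfl fun j _ => h5 j, Finset.sum_add_distrib,
      Finset.sum_const, Finset.sum_ite_eq' Finset.univ i (fun _ => V - U * U)]
    simp [mul_comm]
  simp only [hswap, hEρ, hEf, hEff, hsum2]
  rw [Finset.sum_const, Finset.sum_const]
  have hne : ((n : ℝ) + 1) ≠ 0 := by positivity
  simp only [Finset.card_univ, Fintype.card_fin, nsmul_eq_mul, hc]
  push_cast
  field_simp
  ring
end Aux3

section Aux4
open MeasureTheory Real
variable {α : Type*} [MeasurableSpace α] (μ : Measure α) [IsFiniteMeasure μ]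

lemma aux_partB (L : α → ℝ) (hLm : Measurable L) (hL1 : ∫ x, L x ∂μ = 1)
    (hLpos : ∀ x, 0 ≤ L x)
    (CL : ℝ) (hLb : ∀ x, |L x| ≤ CL)
    (h : α → α → ℝ) (hhm : Measurable fun p : α × α => h p.1 p.2)
    (Ch : ℝ) (hCh : 0 ≤ Ch) (hhb : ∀ z x, |h z x| ≤ Ch)
    (hmean : ∀ z, ∫ x, L x * h z x ∂μ = 0)
    (n : ℕ) (i : Fin (n + 1)) :
    ∫ w : Fin (n + 1) → α,
        (∏ m, L (w m)) * ((↑(n + 1) : ℝ)⁻¹ * ∑ j, h (w i) (w j)) ^ 2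
        ∂(Measure.pi fun _ => μ)
      ≤ Ch ^ 2 / (↑(n + 1) : ℝ) := by
  classical
  rcases isEmpty_or_nonempty α with hα | hα
  · haveI : IsEmpty (Fin (n + 1) → α) := ⟨fun w => hα.false (w 0)⟩
    rw [integral_of_isEmpty]
    positivity
  obtain ⟨x₀⟩ := hα
  have hCL : 0 ≤ CL := (abs_nonneg _).trans (hLb x₀)
  set c : ℝ := (↑(n + 1) : ℝ)⁻¹ with hc
  set ρ : (Fin (n + 1) → α) → ℝ := fun w => ∏ m, L (w m) with hρ
  have hρm : Measurable ρ := by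
    rw [hρ]; exact Finset.measurable_prod _ (fun m _ => hLm.comp (measurable_pi_apply m))
  have hρb : ∀ w, |ρ w| ≤ CL ^ (n + 1) := by
    intro w
    rw [hρ, Finset.abs_prod]
    calc ∏ m, |L (w m)| ≤ ∏ _m : Fin (n + 1), CL :=
          Finset.prod_le_prod (fun m _ => abs_nonneg _) (fun m _ => hLb (w m))
      _ = CL ^ (n + 1) := by simp
  have hρpos : ∀ w, 0 ≤ ρ w := fun w => Finset.prod_nonneg fun m _ => hLpos (w m)
  have hco : ∀ a b : Fin (n + 1), Measurable fun w : Fin (n + 1) → α => h (w a) (w b) := by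
    intro a b
    exact Measurable.comp' (g := fun p : α × α => h p.1 p.2)
      (f := fun w : Fin (n + 1) → α => (w a, w b)) hhm
      ((measurable_pi_apply a).prodMk (measurable_pi_apply b))
  have intble : ∀ (g : (Fin (n + 1) → α) → ℝ), Measurable g → ∀ C : ℝ,
      (∀ w, |g w| ≤ C) → Integrable g (Measure.pi fun _ : Fin (n + 1) => μ) :=
    fun g hg C hb => ⟨hg.aestronglyMeasurable, HasFiniteIntegral.of_bounded
      (C := C) (Filter.Eventually.of_forall (by simpa [Real.norm_eq_abs] using hb))⟩
  have intρhh : ∀ j k, Integrable (fun w => ρ w * (h (w i) (w j) * h (w i) (w k)))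
      (Measure.pi fun _ : Fin (n + 1) => μ) := by
    intro j k
    refine intble _ (hρm.mul ((hco i j).mul (hco i k))) (CL ^ (n + 1) * (Ch * Ch))
      fun w => ?_
    rw [abs_mul, abs_mul]
    exact mul_le_mul (hρb w) (mul_le_mul (hhb _ _) (hhb _ _) (abs_nonneg _) hCh)
      (by positivity) (by positivity)
  have hEρ : ∫ w, ρ w ∂(Measure.pi fun _ : Fin (n + 1) => μ) = 1 := by
    have := aux_pi_prod μ (fun _ : Fin (n + 1) => L)
    simpa [hL1] using this
  have intρ : Integrable ρ (Measure.pi fun _ : Fin (n + 1) => μ) := intble ρ hρm _ hρb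
  -- pointwise expansion
  have hpt : ∀ w : Fin (n + 1) → α,
      ρ w * (c * ∑ j, h (w i) (w j)) ^ 2
        = c ^ 2 * ∑ j, ∑ k, ρ w * (h (w i) (w j) * h (w i) (w k)) := by
    intro w
    have h1 : (∑ j, h (w i) (w j)) * (∑ k, h (w i) (w k))
        = ∑ j, ∑ k, h (w i) (w j) * h (w i) (w k) := Finset.sum_mul_sum _ _ _ _
    have h3 : ρ w * ∑ j, ∑ k, h (w i) (w j) * h (w i) (w k)
        = ∑ j, ∑ k, ρ w * (h (w i) (w j) * h (w i) (w k)) := by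
      rw [Finset.mul_sum]
      exact Finset.sum_congr rfl fun j _ => Finset.mul_sum _ _ _
    calc ρ w * (c * ∑ j, h (w i) (w j)) ^ 2
        = c ^ 2 * (ρ w * ((∑ j, h (w i) (w j)) * (∑ k, h (w i) (w k)))) := by ring
      _ = _ := by rw [h1, h3]
  rw [integral_congr_ae (Filter.Eventually.of_forall hpt), integral_const_mul,
    integral_finset_sum _ (fun j _ =>
      integrable_finset_sum _ fun k _ => intρhh j k)]
  have hswap : ∀ j : Fin (n + 1),
      (∫ w, ∑ k, ρ w * (h (w i) (w j) * h (w i) (w k))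
          ∂(Measure.pi fun _ : Fin (n + 1) => μ))
        = ∑ k, ∫ w, ρ w * (h (w i) (w j) * h (w i) (w k))
            ∂(Measure.pi fun _ : Fin (n + 1) => μ) :=
    fun j => integral_finset_sum _ (fun k _ => intρhh j k)
  simp only [hswap]
  -- bound each term
  have hterm : ∀ j k : Fin (n + 1),
      (∫ w, ρ w * (h (w i) (w j) * h (w i) (w k))
          ∂(Measure.pi fun _ : Fin (n + 1) => μ))
        ≤ if k = j then Ch ^ 2 else 0 := by
    intro j k
    by_cases hkj : k = j
    · subst hkj
      rw [if_pos rfl]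
      have hle : ∀ w : Fin (n + 1) → α,
          ρ w * (h (w i) (w k) * h (w i) (w k)) ≤ Ch ^ 2 * ρ w := by
        intro w
        have h2 : h (w i) (w k) * h (w i) (w k) ≤ Ch ^ 2 := by
          have := abs_le.1 (hhb (w i) (w k))
          nlinarith [this.1, this.2]
        calc ρ w * (h (w i) (w k) * h (w i) (w k)) ≤ ρ w * Ch ^ 2 :=
              mul_le_mul_of_nonneg_left h2 (hρpos w)
          _ = Ch ^ 2 * ρ w := by ring
      calc (∫ w, ρ w * (h (w i) (w k) * h (w i) (w k))
            ∂(Measure.pi fun _ : Fin (n + 1) => μ))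
          ≤ ∫ w, Ch ^ 2 * ρ w ∂(Measure.pi fun _ : Fin (n + 1) => μ) :=
            integral_mono (intρhh k k) (intρ.const_mul _) hle
        _ = Ch ^ 2 := by rw [integral_const_mul, hEρ, mul_one]
    · rw [if_neg hkj]
      rcases eq_or_ne k i with hki | hki
      · -- k = i, hence j ≠ i; swap the two factors
        have hji : j ≠ i := fun hji => hkj (hki.trans hji.symm)
        have hcomm : ∀ w : Fin (n + 1) → α,
            ρ w * (h (w i) (w j) * h (w i) (w k))
              = ρ w * (h (w i) (w k) * h (w i) (w j)) := by
          intro w; ring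
        rw [integral_congr_ae (Filter.Eventually.of_forall hcomm)]
        exact le_of_eq (aux_split_zero μ L hLm hL1 CL hLb h hhm Ch hhb hmean
          hji hkj)
      · exact le_of_eq (aux_split_zero μ L hLm hL1 CL hLb h hhm Ch hhb hmean
          hki (Ne.symm hkj))
  have hsum : (∑ j : Fin (n + 1), ∑ k : Fin (n + 1),
      ∫ w, ρ w * (h (w i) (w j) * h (w i) (w k))
        ∂(Measure.pi fun _ : Fin (n + 1) => μ))
      ≤ (↑(n + 1) : ℝ) * Ch ^ 2 := by
    calc (∑ j : Fin (n + 1), ∑ k : Fin (n + 1),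
        ∫ w, ρ w * (h (w i) (w j) * h (w i) (w k))
          ∂(Measure.pi fun _ : Fin (n + 1) => μ))
        ≤ ∑ j : Fin (n + 1), ∑ k : Fin (n + 1), (if k = j then Ch ^ 2 else 0) :=
          Finset.sum_le_sum fun j _ => Finset.sum_le_sum fun k _ => hterm j k
      _ = (↑(n + 1) : ℝ) * Ch ^ 2 := by
          simp [Finset.sum_ite_eq', Finset.card_univ, mul_comm]
  calc c ^ 2 * (∑ j : Fin (n + 1), ∑ k : Fin (n + 1),
      ∫ w, ρ w * (h (w i) (w j) * h (w i) (w k))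
        ∂(Measure.pi fun _ : Fin (n + 1) => μ))
      ≤ c ^ 2 * ((↑(n + 1) : ℝ) * Ch ^ 2) :=
        mul_le_mul_of_nonneg_left hsum (by positivity)
    _ = Ch ^ 2 / (↑(n + 1) : ℝ) := by
        rw [hc]
        have hne : ((n : ℝ) + 1) ≠ 0 := by positivity
        push_cast
        field_simp
end Aux4

/-- Theorem 3: if the likelihood is uniformly bounded, `C₁ ≤ l ≤ C₂` with
`0 < C₁`, then the mean squared error `E[(U(λ) − Û^M_srNMC(λ))²]` of the srNMC
estimator converges to `0` at rate `O(1/M)`: there is a constant `K` with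
`MSE ≤ K/M` for all `M ≥ 1`.  The samples `(θⁱ, yⁱ)` are i.i.d. from the joint
law of parameter and observation, which has density `z ↦ l(z.2|z.1,λ)` w.r.t.
`Pθ ⊗ ν`, the marginal is `p(y|λ) = ∫ l(y|θ',λ) dPθ(θ')`, and
`U(λ) = E[log(l(y|θ,λ)/p(y|λ))]` is the expected information gain. -/
theorem srNMC_mse_rate
    {Θ Y : Type*} [MeasurableSpace Θ] [MeasurableSpace Y]
    (Pθ : Measure Θ) [IsProbabilityMeasure Pθ]
    (ν : Measure Y) [SigmaFinite ν]
    (l : Y → Θ → ℝ)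
    (hml : Measurable fun z : Θ × Y => l z.2 z.1)
    (C₁ C₂ : ℝ) (hC₁ : 0 < C₁)
    (hlb : ∀ y θ, C₁ ≤ l y θ) (hub : ∀ y θ, l y θ ≤ C₂)
    -- `l(·|θ,λ)` is a probability density w.r.t. `ν` for every `θ`
    (hnorm : ∀ θ, ∫ y, l y θ ∂ν = 1) :
    ∃ K : ℝ, ∀ M : ℕ, 1 ≤ M →
      (∫ w : Fin M → Θ × Y, (∏ i, l (w i).2 (w i).1) *
        ((∫ z : Θ × Y, l z.2 z.1 *
            Real.log (l z.2 z.1 / ∫ θ', l z.2 θ' ∂Pθ) ∂(Pθ.prod ν)) -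
          (M : ℝ)⁻¹ * ∑ i, Real.log (l (w i).2 (w i).1 /
            ((M : ℝ)⁻¹ * ∑ j, l (w i).2 (w j).1))) ^ 2
        ∂(Measure.pi fun _ : Fin M => Pθ.prod ν)) ≤ K / M := by
  classical
  -- nonemptiness of Θ and Y
  obtain ⟨θ₀⟩ : Nonempty Θ := by
    by_contra hc
    rw [not_nonempty_iff] at hc
    have h1 : (Pθ : Measure Θ) Set.univ = 1 := measure_univ
    rw [Set.univ_eq_empty_iff.2 hc, measure_empty] at h1
    exact zero_ne_one h1
  obtain ⟨y₀⟩ : Nonempty Y := by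
    by_contra hc
    rw [not_nonempty_iff] at hc
    have h0 := hnorm θ₀
    rw [ν.eq_zero_of_isEmpty, integral_zero_measure] at h0
    exact zero_ne_one h0
  have hC12 : C₁ ≤ C₂ := (hlb y₀ θ₀).trans (hub y₀ θ₀)
  have hC₂ : 0 < C₂ := lt_of_lt_of_le hC₁ hC12
  -- finiteness of ν
  have hlθm : ∀ θ', Measurable fun y => l y θ' := fun θ' =>
    Measurable.comp' (g := fun z : Θ × Y => l z.2 z.1)
      (f := fun y => (θ', y)) hml (measurable_const.prodMk measurable_id)
  have hlym : ∀ y, Measurable fun θ' => l y θ' := fun y =>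
    Measurable.comp' (g := fun z : Θ × Y => l z.2 z.1)
      (f := fun θ' => (θ', y)) hml (measurable_id.prodMk measurable_const)
  have hlθ₀int : Integrable (fun y => l y θ₀) ν := by
    by_contra hc
    have := hnorm θ₀
    rw [integral_undef hc] at this
    exact zero_ne_one this
  haveI : IsFiniteMeasure ν := by
    constructor
    have hc1 : Integrable (fun _ : Y => C₁) ν :=
      hlθ₀int.mono' aestronglyMeasurable_const
        (Filter.Eventually.of_forall fun y => by
          rw [Real.norm_eq_abs, abs_of_pos hC₁]; exact hlb y θ₀)
    rcases integrable_const_iff.1 hc1 with h | h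
    · exact absurd h hC₁.ne'
    · exact h.measure_univ_lt_top
  haveI : IsFiniteMeasure (Pθ.prod ν) := by infer_instance
  -- bounds and measurability for q
  have hqm : Measurable fun y => ∫ θ', l y θ' ∂Pθ := by
    have h0 : Measurable fun w : Y × Θ => l w.1 w.2 :=
      Measurable.comp' (g := fun z : Θ × Y => l z.2 z.1)
        (f := fun w : Y × Θ => (w.2, w.1)) hml (measurable_snd.prodMk measurable_fst)
    exact (h0.stronglyMeasurable.integral_prod_right).measurable
  have hqlb : ∀ y, C₁ ≤ ∫ θ', l y θ' ∂Pθ := by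
    intro y
    have hint : Integrable (fun θ' => l y θ') Pθ :=
      ⟨(hlym y).aestronglyMeasurable, HasFiniteIntegral.of_bounded (C := C₂)
        (Filter.Eventually.of_forall fun θ' => by
          rw [Real.norm_eq_abs, abs_of_pos (lt_of_lt_of_le hC₁ (hlb y θ'))]
          exact hub y θ')⟩
    calc C₁ = ∫ _θ' , C₁ ∂Pθ := by simp
      _ ≤ ∫ θ', l y θ' ∂Pθ := integral_mono (integrable_const _) hint fun θ' => hlb y θ'
  have hqub : ∀ y, (∫ θ', l y θ' ∂Pθ) ≤ C₂ := by
    intro y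
    have hint : Integrable (fun θ' => l y θ') Pθ :=
      ⟨(hlym y).aestronglyMeasurable, HasFiniteIntegral.of_bounded (C := C₂)
        (Filter.Eventually.of_forall fun θ' => by
          rw [Real.norm_eq_abs, abs_of_pos (lt_of_lt_of_le hC₁ (hlb y θ'))]
          exact hub y θ')⟩
    calc (∫ θ', l y θ' ∂Pθ) ≤ ∫ _θ', C₂ ∂Pθ :=
          integral_mono hint (integrable_const _) fun θ' => hub y θ'
      _ = C₂ := by simp
  -- basic integrability over μ0 := Pθ.prod ν
  have intble0 : ∀ (g : Θ × Y → ℝ), Measurable g → ∀ C : ℝ,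
      (∀ z, |g z| ≤ C) → Integrable g (Pθ.prod ν) :=
    fun g hg C hb => ⟨hg.aestronglyMeasurable, HasFiniteIntegral.of_bounded
      (C := C) (Filter.Eventually.of_forall (by simpa [Real.norm_eq_abs] using hb))⟩
  have hlabs : ∀ z : Θ × Y, |l z.2 z.1| ≤ C₂ := fun z => by
    rw [abs_of_pos (lt_of_lt_of_le hC₁ (hlb z.2 z.1))]; exact hub z.2 z.1
  have intL : Integrable (fun z : Θ × Y => l z.2 z.1) (Pθ.prod ν) :=
    intble0 _ hml C₂ hlabs
  have hL1 : ∫ z : Θ × Y, l z.2 z.1 ∂(Pθ.prod ν) = 1 := by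
    rw [MeasureTheory.integral_prod _ intL]
    calc ∫ θ, ∫ y, l y θ ∂ν ∂Pθ = ∫ _θ, (1 : ℝ) ∂Pθ :=
          integral_congr_ae (Filter.Eventually.of_forall fun θ => hnorm θ)
      _ = 1 := by simp
  -- the mean-zero property of h z x = l z.2 x.1 - q z.2
  have hlyint : ∀ y, Integrable (fun z : Θ × Y => l z.2 z.1 * l y z.1) (Pθ.prod ν) := by
    intro y
    refine intble0 _ (hml.mul (Measurable.comp' (g := fun z : Θ × Y => l z.2 z.1)
      (f := fun z : Θ × Y => (z.1, y)) hml (measurable_fst.prodMk measurable_const)))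
      (C₂ * C₂) fun z => ?_
    rw [abs_mul]
    exact mul_le_mul (hlabs z) (by
      rw [abs_of_pos (lt_of_lt_of_le hC₁ (hlb y z.1))]; exact hub y z.1)
      (abs_nonneg _) hC₂.le
  have key1 : ∀ y, ∫ z : Θ × Y, l z.2 z.1 * l y z.1 ∂(Pθ.prod ν)
      = ∫ θ', l y θ' ∂Pθ := by
    intro y
    rw [MeasureTheory.integral_prod _ (hlyint y)]
    refine integral_congr_ae (Filter.Eventually.of_forall fun θ => ?_)
    dsimp only
    rw [integral_mul_const, hnorm θ, one_mul]
  have hmean : ∀ z : Θ × Y, ∫ x : Θ × Y,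
      l x.2 x.1 * (l z.2 x.1 - ∫ θ', l z.2 θ' ∂Pθ) ∂(Pθ.prod ν) = 0 := by
    intro z
    have hre : (fun x : Θ × Y => l x.2 x.1 * (l z.2 x.1 - ∫ θ', l z.2 θ' ∂Pθ))
        = fun x => l x.2 x.1 * l z.2 x.1 - l x.2 x.1 * (∫ θ', l z.2 θ' ∂Pθ) := by
      funext x; ring
    rw [hre, integral_sub (hlyint z.2) (intL.mul_const _), key1,
      integral_mul_const, hL1, one_mul, sub_self]
  -- constants
  set B : ℝ := Real.log C₂ - Real.log C₁ with hB
  have hB0 : 0 ≤ B := by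
    rw [hB]; have := Real.log_le_log hC₁ hC12; linarith
  set R : ℝ := ((Pθ.prod ν) Set.univ).toReal with hR
  have hR0 : 0 ≤ R := ENNReal.toReal_nonneg
  -- f0 facts
  have hf0m : Measurable fun z : Θ × Y =>
      Real.log (l z.2 z.1 / ∫ θ', l z.2 θ' ∂Pθ) :=
    Real.measurable_log.comp' (hml.div (hqm.comp' measurable_snd))
  have hlog_mem : ∀ x : ℝ, C₁ ≤ x → x ≤ C₂ → |Real.log x - Real.log C₁| ≤ B := by
    intro x h1 h2
    rw [abs_of_nonneg (by linarith [Real.log_le_log hC₁ h1])]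
    have := Real.log_le_log (lt_of_lt_of_le hC₁ h1) h2
    rw [hB]; linarith
  have hlogd : ∀ x y : ℝ, C₁ ≤ x → x ≤ C₂ → C₁ ≤ y → y ≤ C₂ →
      |Real.log x - Real.log y| ≤ B := by
    intro x y h1 h2 h3 h4
    have a1 : Real.log x ≤ Real.log C₂ := Real.log_le_log (lt_of_lt_of_le hC₁ h1) h2
    have a2 : Real.log C₁ ≤ Real.log x := Real.log_le_log hC₁ h1
    have a3 : Real.log y ≤ Real.log C₂ := Real.log_le_log (lt_of_lt_of_le hC₁ h3) h4
    have a4 : Real.log C₁ ≤ Real.log y := Real.log_le_log hC₁ h3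
    rw [hB]
    exact abs_le.2 ⟨by linarith, by linarith⟩
  -- f0 bound
  have hlpos : ∀ (y : Y) (θ : Θ), 0 < l y θ := fun y θ => lt_of_lt_of_le hC₁ (hlb y θ)
  have hf0b : ∀ z : Θ × Y, |Real.log (l z.2 z.1 / ∫ θ', l z.2 θ' ∂Pθ)| ≤ B := by
    intro z
    rw [Real.log_div (hlpos z.2 z.1).ne' (lt_of_lt_of_le hC₁ (hqlb z.2)).ne']
    exact hlogd _ _ (hlb _ _) (hub _ _) (hqlb _) (hqub _)
  -- V bound
  have hVle : (∫ z : Θ × Y, l z.2 z.1 *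
      (Real.log (l z.2 z.1 / ∫ θ', l z.2 θ' ∂Pθ) *
        Real.log (l z.2 z.1 / ∫ θ', l z.2 θ' ∂Pθ)) ∂(Pθ.prod ν)) ≤ C₂ * B ^ 2 * R := by
    have hint : Integrable (fun z : Θ × Y => l z.2 z.1 *
        (Real.log (l z.2 z.1 / ∫ θ', l z.2 θ' ∂Pθ) *
          Real.log (l z.2 z.1 / ∫ θ', l z.2 θ' ∂Pθ))) (Pθ.prod ν) := by
      refine intble0 _ (hml.mul (hf0m.mul hf0m)) (C₂ * (B * B)) fun z => ?_
      rw [abs_mul, abs_mul]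
      exact mul_le_mul (hlabs z) (mul_le_mul (hf0b z) (hf0b z) (abs_nonneg _) hB0)
        (by positivity) hC₂.le
    calc (∫ z : Θ × Y, l z.2 z.1 *
        (Real.log (l z.2 z.1 / ∫ θ', l z.2 θ' ∂Pθ) *
          Real.log (l z.2 z.1 / ∫ θ', l z.2 θ' ∂Pθ)) ∂(Pθ.prod ν))
        ≤ ∫ _z : Θ × Y, C₂ * (B * B) ∂(Pθ.prod ν) := by
          refine integral_mono hint (integrable_const _) fun z => ?_
          have h2 : Real.log (l z.2 z.1 / ∫ θ', l z.2 θ' ∂Pθ) *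
              Real.log (l z.2 z.1 / ∫ θ', l z.2 θ' ∂Pθ) ≤ B * B := by
            have := abs_le.1 (hf0b z)
            nlinarith [this.1, this.2]
          exact mul_le_mul (hub _ _) h2 (mul_self_nonneg _) hC₂.le
      _ = C₂ * B ^ 2 * R := by
          rw [integral_const, smul_eq_mul, hR, Measure.real]; ring
  -- the mean-zero kernel h and its properties
  have hhm : Measurable fun p : (Θ × Y) × (Θ × Y) =>
      l p.1.2 p.2.1 - ∫ θ', l p.1.2 θ' ∂Pθ := by
    refine Measurable.sub ?_ (hqm.comp' (measurable_snd.comp' measurable_fst))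
    exact Measurable.comp' (g := fun z : Θ × Y => l z.2 z.1)
      (f := fun p : (Θ × Y) × (Θ × Y) => (p.2.1, p.1.2)) hml
      ((measurable_fst.comp' measurable_snd).prodMk
        (measurable_snd.comp' measurable_fst))
  have hhb : ∀ z x : Θ × Y, |l z.2 x.1 - ∫ θ', l z.2 θ' ∂Pθ| ≤ C₂ - C₁ := by
    intro z x
    have h1 := hlb z.2 x.1
    have h2 := hub z.2 x.1
    have h3 := hqlb z.2
    have h4 := hqub z.2
    exact abs_le.2 ⟨by linarith, by linarith⟩
  -- the constant
  refine ⟨2 * (C₂ * B ^ 2 * R) + 2 * ((C₂ - C₁) ^ 2 / C₁ ^ 2), ?_⟩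
  intro M hM
  obtain ⟨n, rfl⟩ : ∃ n, M = n + 1 := ⟨M - 1, (Nat.succ_pred_eq_of_pos hM).symm⟩
  have hcard : ((n + 1 : ℕ) : ℝ) ≠ 0 := by positivity
  have hcard0 : (0:ℝ) < ((n + 1 : ℕ) : ℝ) := by positivity
  -- bounds on the empirical marginal
  have hphat_lb : ∀ (w : Fin (n + 1) → Θ × Y) (i : Fin (n + 1)),
      C₁ ≤ ((n + 1 : ℕ) : ℝ)⁻¹ * ∑ j, l (w i).2 (w j).1 := by
    intro w i
    have h1 : ((n + 1 : ℕ) : ℝ) * C₁ ≤ ∑ j, l (w i).2 (w j).1 := by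
      have := Finset.sum_le_sum (s := Finset.univ)
        (fun j _ => hlb (w i).2 (w j).1)
      simpa [Finset.sum_const, Finset.card_univ, nsmul_eq_mul] using this
    calc C₁ = ((n + 1 : ℕ) : ℝ)⁻¹ * (((n + 1 : ℕ) : ℝ) * C₁) := by
          field_simp
      _ ≤ _ := mul_le_mul_of_nonneg_left h1 (by positivity)
  have hphat_ub : ∀ (w : Fin (n + 1) → Θ × Y) (i : Fin (n + 1)),
      ((n + 1 : ℕ) : ℝ)⁻¹ * ∑ j, l (w i).2 (w j).1 ≤ C₂ := by
    intro w i
    have h1 : (∑ j, l (w i).2 (w j).1) ≤ ((n + 1 : ℕ) : ℝ) * C₂ := by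
      have := Finset.sum_le_sum (s := Finset.univ)
        (fun j _ => hub (w i).2 (w j).1)
      simpa [Finset.sum_const, Finset.card_univ, nsmul_eq_mul] using this
    calc ((n + 1 : ℕ) : ℝ)⁻¹ * ∑ j, l (w i).2 (w j).1
        ≤ ((n + 1 : ℕ) : ℝ)⁻¹ * (((n + 1 : ℕ) : ℝ) * C₂) :=
          mul_le_mul_of_nonneg_left h1 (by positivity)
      _ = C₂ := by field_simp
  -- measurability on the product space
  haveI : IsFiniteMeasure (Measure.pi fun _ : Fin (n + 1) => Pθ.prod ν) := by
    infer_instance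
  have hmeas_lij : ∀ i j : Fin (n + 1),
      Measurable fun w : Fin (n + 1) → Θ × Y => l (w i).2 (w j).1 := by
    intro i j
    exact Measurable.comp' (g := fun z : Θ × Y => l z.2 z.1)
      (f := fun w : Fin (n + 1) → Θ × Y => ((w j).1, (w i).2)) hml
      ((measurable_fst.comp' (measurable_pi_apply j)).prodMk
        (measurable_snd.comp' (measurable_pi_apply i)))
  have hmeas_qi : ∀ i : Fin (n + 1),
      Measurable fun w : Fin (n + 1) → Θ × Y => ∫ θ', l (w i).2 θ' ∂Pθ :=
    fun i => hqm.comp' (measurable_snd.comp' (measurable_pi_apply i))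
  have hmeas_phat : ∀ i : Fin (n + 1),
      Measurable fun w : Fin (n + 1) → Θ × Y =>
        ((n + 1 : ℕ) : ℝ)⁻¹ * ∑ j, l (w i).2 (w j).1 :=
    fun i => (Finset.measurable_sum _ fun j _ => hmeas_lij i j).const_mul _
  have hmeas_f0i : ∀ i : Fin (n + 1),
      Measurable fun w : Fin (n + 1) → Θ × Y =>
        Real.log (l (w i).2 (w i).1 / ∫ θ', l (w i).2 θ' ∂Pθ) :=
    fun i => hf0m.comp' (measurable_pi_apply i)
  have hmeas_ai : ∀ i : Fin (n + 1),
      Measurable fun w : Fin (n + 1) → Θ × Y =>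
        Real.log (∫ θ', l (w i).2 θ' ∂Pθ) -
          Real.log (((n + 1 : ℕ) : ℝ)⁻¹ * ∑ j, l (w i).2 (w j).1) :=
    fun i => (Real.measurable_log.comp' (hmeas_qi i)).sub
      (Real.measurable_log.comp' (hmeas_phat i))
  have hmeas_hi : ∀ i : Fin (n + 1),
      Measurable fun w : Fin (n + 1) → Θ × Y =>
        ((n + 1 : ℕ) : ℝ)⁻¹ * ∑ j, (l (w i).2 (w j).1 - ∫ θ', l (w i).2 θ' ∂Pθ) :=
    fun i => (Finset.measurable_sum _ fun j _ =>
      (hmeas_lij i j).sub (hmeas_qi i)).const_mul _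
  have hρm : Measurable fun w : Fin (n + 1) → Θ × Y => ∏ i, l (w i).2 (w i).1 :=
    Finset.measurable_prod _ fun m _ => hml.comp' (measurable_pi_apply m)
  have hρpos : ∀ w : Fin (n + 1) → Θ × Y, 0 ≤ ∏ i, l (w i).2 (w i).1 :=
    fun w => Finset.prod_nonneg fun m _ => (hlpos _ _).le
  have hρb : ∀ w : Fin (n + 1) → Θ × Y, |∏ i, l (w i).2 (w i).1| ≤ C₂ ^ (n + 1) := by
    intro w
    rw [Finset.abs_prod]
    calc ∏ m, |l (w m).2 (w m).1| ≤ ∏ _m : Fin (n + 1), C₂ :=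
          Finset.prod_le_prod (fun m _ => abs_nonneg _) (fun m _ => hlabs (w m))
      _ = C₂ ^ (n + 1) := by simp
  have intbleP : ∀ (g : (Fin (n + 1) → Θ × Y) → ℝ), Measurable g → ∀ C : ℝ,
      (∀ w, |g w| ≤ C) →
      Integrable g (Measure.pi fun _ : Fin (n + 1) => Pθ.prod ν) :=
    fun g hg C hb => ⟨hg.aestronglyMeasurable, HasFiniteIntegral.of_bounded
      (C := C) (Filter.Eventually.of_forall (by simpa [Real.norm_eq_abs] using hb))⟩
  -- averaging bound
  have havg : ∀ (C : ℝ) (g : Fin (n + 1) → ℝ), (∀ i, |g i| ≤ C) →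
      |((n + 1 : ℕ) : ℝ)⁻¹ * ∑ i, g i| ≤ C := by
    intro C g hg
    rw [abs_mul, abs_of_nonneg (by positivity : (0:ℝ) ≤ ((n + 1 : ℕ) : ℝ)⁻¹)]
    have h1 : |∑ i, g i| ≤ ((n + 1 : ℕ) : ℝ) * C := by
      calc |∑ i, g i| ≤ ∑ i, |g i| := Finset.abs_sum_le_sum_abs _ _
        _ ≤ ∑ _i : Fin (n + 1), C := Finset.sum_le_sum fun i _ => hg i
        _ = ((n + 1 : ℕ) : ℝ) * C := by
            simp [Finset.sum_const, Finset.card_univ, nsmul_eq_mul]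
    calc ((n + 1 : ℕ) : ℝ)⁻¹ * |∑ i, g i|
        ≤ ((n + 1 : ℕ) : ℝ)⁻¹ * (((n + 1 : ℕ) : ℝ) * C) :=
          mul_le_mul_of_nonneg_left h1 (by positivity)
      _ = C := by rw [← mul_assoc, inv_mul_cancel₀ hcard, one_mul]
  have hab : ∀ (w : Fin (n + 1) → Θ × Y) (i : Fin (n + 1)),
      |Real.log (∫ θ', l (w i).2 θ' ∂Pθ) -
        Real.log (((n + 1 : ℕ) : ℝ)⁻¹ * ∑ j, l (w i).2 (w j).1)| ≤ B :=
    fun w i => hlogd _ _ (hqlb _) (hqub _) (hphat_lb w i) (hphat_ub w i)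
  have hhib : ∀ (w : Fin (n + 1) → Θ × Y) (i : Fin (n + 1)),
      |((n + 1 : ℕ) : ℝ)⁻¹ * ∑ j, (l (w i).2 (w j).1 - ∫ θ', l (w i).2 θ' ∂Pθ)|
        ≤ C₂ - C₁ :=
    fun w i => havg _ _ (fun j => hhb (w i) (w j))
  -- abbreviation for U0
  set U0 : ℝ := ∫ z : Θ × Y, l z.2 z.1 *
      Real.log (l z.2 z.1 / ∫ θ', l z.2 θ' ∂Pθ) ∂(Pθ.prod ν) with hU0def
  set V0 : ℝ := ∫ z : Θ × Y, l z.2 z.1 *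
      (Real.log (l z.2 z.1 / ∫ θ', l z.2 θ' ∂Pθ) *
        Real.log (l z.2 z.1 / ∫ θ', l z.2 θ' ∂Pθ)) ∂(Pθ.prod ν) with hV0def
  -- pointwise rewriting of the integrand
  have hpt : ∀ w : Fin (n + 1) → Θ × Y,
      (∏ i, l (w i).2 (w i).1) *
        (U0 - ((n + 1 : ℕ) : ℝ)⁻¹ * ∑ i, Real.log (l (w i).2 (w i).1 /
          (((n + 1 : ℕ) : ℝ)⁻¹ * ∑ j, l (w i).2 (w j).1))) ^ 2
      = (∏ i, l (w i).2 (w i).1) *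
        ((U0 - ((n + 1 : ℕ) : ℝ)⁻¹ *
            ∑ i, Real.log (l (w i).2 (w i).1 / ∫ θ', l (w i).2 θ' ∂Pθ)) -
          ((n + 1 : ℕ) : ℝ)⁻¹ * ∑ i, (Real.log (∫ θ', l (w i).2 θ' ∂Pθ) -
            Real.log (((n + 1 : ℕ) : ℝ)⁻¹ * ∑ j, l (w i).2 (w j).1))) ^ 2 := by
    intro w
    have hlog : ∀ i : Fin (n + 1),
        Real.log (l (w i).2 (w i).1 /
            (((n + 1 : ℕ) : ℝ)⁻¹ * ∑ j, l (w i).2 (w j).1))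
          = Real.log (l (w i).2 (w i).1 / ∫ θ', l (w i).2 θ' ∂Pθ) +
            (Real.log (∫ θ', l (w i).2 θ' ∂Pθ) -
              Real.log (((n + 1 : ℕ) : ℝ)⁻¹ * ∑ j, l (w i).2 (w j).1)) := by
      intro i
      rw [Real.log_div (hlpos _ _).ne' (lt_of_lt_of_le hC₁ (hphat_lb w i)).ne',
        Real.log_div (hlpos _ _).ne' (lt_of_lt_of_le hC₁ (hqlb _)).ne']
      ring
    rw [Finset.sum_congr rfl fun i _ => hlog i, Finset.sum_add_distrib, mul_add]
    ring
  refine le_trans (le_of_eq (integral_congr_ae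
    (Filter.Eventually.of_forall hpt))) ?_
  -- integrability of the three integrands
  have hDb : ∀ w : Fin (n + 1) → Θ × Y,
      |(U0 - ((n + 1 : ℕ) : ℝ)⁻¹ *
          ∑ i, Real.log (l (w i).2 (w i).1 / ∫ θ', l (w i).2 θ' ∂Pθ)) -
        ((n + 1 : ℕ) : ℝ)⁻¹ * ∑ i, (Real.log (∫ θ', l (w i).2 θ' ∂Pθ) -
          Real.log (((n + 1 : ℕ) : ℝ)⁻¹ * ∑ j, l (w i).2 (w j).1))|
        ≤ (|U0| + B) + B := by
    intro w
    have h1 : |U0 - ((n + 1 : ℕ) : ℝ)⁻¹ *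
        ∑ i, Real.log (l (w i).2 (w i).1 / ∫ θ', l (w i).2 θ' ∂Pθ)| ≤ |U0| + B := by
      calc |U0 - ((n + 1 : ℕ) : ℝ)⁻¹ *
          ∑ i, Real.log (l (w i).2 (w i).1 / ∫ θ', l (w i).2 θ' ∂Pθ)|
          ≤ |U0| + |((n + 1 : ℕ) : ℝ)⁻¹ *
            ∑ i, Real.log (l (w i).2 (w i).1 / ∫ θ', l (w i).2 θ' ∂Pθ)| :=
            abs_sub _ _
        _ ≤ |U0| + B := add_le_add le_rfl (havg _ _ fun i => hf0b (w i))
    calc _ ≤ |U0 - ((n + 1 : ℕ) : ℝ)⁻¹ *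
          ∑ i, Real.log (l (w i).2 (w i).1 / ∫ θ', l (w i).2 θ' ∂Pθ)| +
          |((n + 1 : ℕ) : ℝ)⁻¹ * ∑ i, (Real.log (∫ θ', l (w i).2 θ' ∂Pθ) -
            Real.log (((n + 1 : ℕ) : ℝ)⁻¹ * ∑ j, l (w i).2 (w j).1))| := abs_sub _ _
      _ ≤ (|U0| + B) + B := add_le_add h1 (havg _ _ fun i => hab w i)
  have hmeas_s : Measurable fun w : Fin (n + 1) → Θ × Y =>
      U0 - ((n + 1 : ℕ) : ℝ)⁻¹ *
        ∑ i, Real.log (l (w i).2 (w i).1 / ∫ θ', l (w i).2 θ' ∂Pθ) :=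
    measurable_const.sub
      ((Finset.measurable_sum _ fun i _ => hmeas_f0i i).const_mul _)
  have hmeas_A : Measurable fun w : Fin (n + 1) → Θ × Y =>
      ((n + 1 : ℕ) : ℝ)⁻¹ * ∑ i, (Real.log (∫ θ', l (w i).2 θ' ∂Pθ) -
        Real.log (((n + 1 : ℕ) : ℝ)⁻¹ * ∑ j, l (w i).2 (w j).1)) :=
    (Finset.measurable_sum _ fun i _ => hmeas_ai i).const_mul _
  have int_main : Integrable (fun w : Fin (n + 1) → Θ × Y =>
      (∏ i, l (w i).2 (w i).1) *
        ((U0 - ((n + 1 : ℕ) : ℝ)⁻¹ *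
            ∑ i, Real.log (l (w i).2 (w i).1 / ∫ θ', l (w i).2 θ' ∂Pθ)) -
          ((n + 1 : ℕ) : ℝ)⁻¹ * ∑ i, (Real.log (∫ θ', l (w i).2 θ' ∂Pθ) -
            Real.log (((n + 1 : ℕ) : ℝ)⁻¹ * ∑ j, l (w i).2 (w j).1))) ^ 2)
      (Measure.pi fun _ : Fin (n + 1) => Pθ.prod ν) := by
    refine intbleP _ (hρm.mul ((hmeas_s.sub hmeas_A).pow_const 2))
      (C₂ ^ (n + 1) * ((|U0| + B) + B) ^ 2) fun w => ?_
    rw [abs_mul]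
    refine mul_le_mul (hρb w) ?_ (abs_nonneg _) (by positivity)
    rw [abs_pow]
    exact pow_le_pow_left₀ (abs_nonneg _) (hDb w) 2
  have int1 : Integrable (fun w : Fin (n + 1) → Θ × Y =>
      (∏ i, l (w i).2 (w i).1) *
        (U0 - ((n + 1 : ℕ) : ℝ)⁻¹ *
          ∑ i, Real.log (l (w i).2 (w i).1 / ∫ θ', l (w i).2 θ' ∂Pθ)) ^ 2)
      (Measure.pi fun _ : Fin (n + 1) => Pθ.prod ν) := by
    refine intbleP _ (hρm.mul (hmeas_s.pow_const 2))
      (C₂ ^ (n + 1) * (|U0| + B) ^ 2) fun w => ?_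
    rw [abs_mul]
    refine mul_le_mul (hρb w) ?_ (abs_nonneg _) (by positivity)
    rw [abs_pow]
    refine pow_le_pow_left₀ (abs_nonneg _) ?_ 2
    calc |U0 - ((n + 1 : ℕ) : ℝ)⁻¹ *
        ∑ i, Real.log (l (w i).2 (w i).1 / ∫ θ', l (w i).2 θ' ∂Pθ)|
        ≤ |U0| + |((n + 1 : ℕ) : ℝ)⁻¹ *
          ∑ i, Real.log (l (w i).2 (w i).1 / ∫ θ', l (w i).2 θ' ∂Pθ)| := abs_sub _ _
      _ ≤ |U0| + B := add_le_add le_rfl (havg _ _ fun i => hf0b (w i))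
  have int2 : Integrable (fun w : Fin (n + 1) → Θ × Y =>
      (∏ i, l (w i).2 (w i).1) *
        (((n + 1 : ℕ) : ℝ)⁻¹ * ∑ i, (Real.log (∫ θ', l (w i).2 θ' ∂Pθ) -
          Real.log (((n + 1 : ℕ) : ℝ)⁻¹ * ∑ j, l (w i).2 (w j).1))) ^ 2)
      (Measure.pi fun _ : Fin (n + 1) => Pθ.prod ν) := by
    refine intbleP _ (hρm.mul (hmeas_A.pow_const 2))
      (C₂ ^ (n + 1) * B ^ 2) fun w => ?_
    rw [abs_mul]
    refine mul_le_mul (hρb w) ?_ (abs_nonneg _) (by positivity)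
    rw [abs_pow]
    exact pow_le_pow_left₀ (abs_nonneg _) (havg _ _ fun i => hab w i) 2
  -- pointwise (x - y)^2 ≤ 2 x^2 + 2 y^2
  have hpt2 : ∀ w : Fin (n + 1) → Θ × Y,
      (∏ i, l (w i).2 (w i).1) *
        ((U0 - ((n + 1 : ℕ) : ℝ)⁻¹ *
            ∑ i, Real.log (l (w i).2 (w i).1 / ∫ θ', l (w i).2 θ' ∂Pθ)) -
          ((n + 1 : ℕ) : ℝ)⁻¹ * ∑ i, (Real.log (∫ θ', l (w i).2 θ' ∂Pθ) -
            Real.log (((n + 1 : ℕ) : ℝ)⁻¹ * ∑ j, l (w i).2 (w j).1))) ^ 2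
      ≤ 2 * ((∏ i, l (w i).2 (w i).1) *
          (U0 - ((n + 1 : ℕ) : ℝ)⁻¹ *
            ∑ i, Real.log (l (w i).2 (w i).1 / ∫ θ', l (w i).2 θ' ∂Pθ)) ^ 2)
        + 2 * ((∏ i, l (w i).2 (w i).1) *
          (((n + 1 : ℕ) : ℝ)⁻¹ * ∑ i, (Real.log (∫ θ', l (w i).2 θ' ∂Pθ) -
            Real.log (((n + 1 : ℕ) : ℝ)⁻¹ * ∑ j, l (w i).2 (w j).1))) ^ 2) := by
    intro w
    nlinarith [hρpos w, mul_nonneg (hρpos w) (sq_nonneg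
      ((U0 - ((n + 1 : ℕ) : ℝ)⁻¹ *
          ∑ i, Real.log (l (w i).2 (w i).1 / ∫ θ', l (w i).2 θ' ∂Pθ)) +
        ((n + 1 : ℕ) : ℝ)⁻¹ * ∑ i, (Real.log (∫ θ', l (w i).2 θ' ∂Pθ) -
          Real.log (((n + 1 : ℕ) : ℝ)⁻¹ * ∑ j, l (w i).2 (w j).1))))]
  have int12 : Integrable (fun w : Fin (n + 1) → Θ × Y =>
      2 * ((∏ i, l (w i).2 (w i).1) *
          (U0 - ((n + 1 : ℕ) : ℝ)⁻¹ *
            ∑ i, Real.log (l (w i).2 (w i).1 / ∫ θ', l (w i).2 θ' ∂Pθ)) ^ 2)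
        + 2 * ((∏ i, l (w i).2 (w i).1) *
          (((n + 1 : ℕ) : ℝ)⁻¹ * ∑ i, (Real.log (∫ θ', l (w i).2 θ' ∂Pθ) -
            Real.log (((n + 1 : ℕ) : ℝ)⁻¹ * ∑ j, l (w i).2 (w j).1))) ^ 2))
      (Measure.pi fun _ : Fin (n + 1) => Pθ.prod ν) :=
    (int1.const_mul 2).add (int2.const_mul 2)
  refine le_trans (integral_mono int_main int12 hpt2) ?_
  rw [integral_add (int1.const_mul 2) (int2.const_mul 2),
    integral_const_mul, integral_const_mul]
  -- part A: exact variance computation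
  have hE1 : (∫ w : Fin (n + 1) → Θ × Y,
      (∏ i, l (w i).2 (w i).1) *
        (U0 - ((n + 1 : ℕ) : ℝ)⁻¹ *
          ∑ i, Real.log (l (w i).2 (w i).1 / ∫ θ', l (w i).2 θ' ∂Pθ)) ^ 2
      ∂(Measure.pi fun _ : Fin (n + 1) => Pθ.prod ν))
      = (V0 - U0 ^ 2) / ((n + 1 : ℕ) : ℝ) :=
    aux_partA (Pθ.prod ν) (fun z : Θ × Y => l z.2 z.1)
      (fun z : Θ × Y => Real.log (l z.2 z.1 / ∫ θ', l z.2 θ' ∂Pθ))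
      hml hf0m C₂ B hlabs hf0b hL1 n
  have hE1le : (∫ w : Fin (n + 1) → Θ × Y,
      (∏ i, l (w i).2 (w i).1) *
        (U0 - ((n + 1 : ℕ) : ℝ)⁻¹ *
          ∑ i, Real.log (l (w i).2 (w i).1 / ∫ θ', l (w i).2 θ' ∂Pθ)) ^ 2
      ∂(Measure.pi fun _ : Fin (n + 1) => Pθ.prod ν))
      ≤ (C₂ * B ^ 2 * R) / ((n + 1 : ℕ) : ℝ) := by
    rw [hE1, div_eq_mul_inv, div_eq_mul_inv]
    refine mul_le_mul_of_nonneg_right ?_ (by positivity)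
    nlinarith [hVle, sq_nonneg U0]
  -- part B: the nested-estimator bias
  have hdiff : ∀ (w : Fin (n + 1) → Θ × Y) (i : Fin (n + 1)),
      ((n + 1 : ℕ) : ℝ)⁻¹ * ∑ j, (l (w i).2 (w j).1 - ∫ θ', l (w i).2 θ' ∂Pθ)
        = (((n + 1 : ℕ) : ℝ)⁻¹ * ∑ j, l (w i).2 (w j).1) -
            ∫ θ', l (w i).2 θ' ∂Pθ := by
    intro w i
    rw [Finset.sum_sub_distrib, Finset.sum_const, Finset.card_univ,
      Fintype.card_fin, mul_sub, nsmul_eq_mul, ← mul_assoc,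
      inv_mul_cancel₀ hcard, one_mul]
  have ha2 : ∀ (w : Fin (n + 1) → Θ × Y) (i : Fin (n + 1)),
      (Real.log (∫ θ', l (w i).2 θ' ∂Pθ) -
          Real.log (((n + 1 : ℕ) : ℝ)⁻¹ * ∑ j, l (w i).2 (w j).1)) ^ 2
        ≤ (C₁ ^ 2)⁻¹ * (((n + 1 : ℕ) : ℝ)⁻¹ *
            ∑ j, (l (w i).2 (w j).1 - ∫ θ', l (w i).2 θ' ∂Pθ)) ^ 2 := by
    intro w i
    have h0 := aux_log_lip hC₁ (hqlb (w i).2) (hphat_lb w i)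
    rw [hdiff w i]
    refine le_trans h0 (le_of_eq ?_)
    rw [div_pow, div_eq_inv_mul]
    ring
  have hcc : (((n + 1 : ℕ) : ℝ)⁻¹) ^ 2 * ((n + 1 : ℕ) : ℝ)
      = ((n + 1 : ℕ) : ℝ)⁻¹ := by
    rw [pow_two, mul_assoc, inv_mul_cancel₀ hcard, mul_one]
  have hBpt : ∀ w : Fin (n + 1) → Θ × Y,
      (∏ i, l (w i).2 (w i).1) *
        (((n + 1 : ℕ) : ℝ)⁻¹ * ∑ i, (Real.log (∫ θ', l (w i).2 θ' ∂Pθ) -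
          Real.log (((n + 1 : ℕ) : ℝ)⁻¹ * ∑ j, l (w i).2 (w j).1))) ^ 2
      ≤ ((n + 1 : ℕ) : ℝ)⁻¹ * ∑ i, (C₁ ^ 2)⁻¹ *
          ((∏ m, l (w m).2 (w m).1) *
            (((n + 1 : ℕ) : ℝ)⁻¹ *
              ∑ j, (l (w i).2 (w j).1 - ∫ θ', l (w i).2 θ' ∂Pθ)) ^ 2) := by
    intro w
    have hsq : (∑ i, (Real.log (∫ θ', l (w i).2 θ' ∂Pθ) -
        Real.log (((n + 1 : ℕ) : ℝ)⁻¹ * ∑ j, l (w i).2 (w j).1))) ^ 2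
        ≤ ((n + 1 : ℕ) : ℝ) * ∑ i, (Real.log (∫ θ', l (w i).2 θ' ∂Pθ) -
          Real.log (((n + 1 : ℕ) : ℝ)⁻¹ * ∑ j, l (w i).2 (w j).1)) ^ 2 := by
      have h := Finset.sum_mul_sq_le_sq_mul_sq Finset.univ
        (fun _ : Fin (n + 1) => (1 : ℝ))
        (fun i => Real.log (∫ θ', l (w i).2 θ' ∂Pθ) -
          Real.log (((n + 1 : ℕ) : ℝ)⁻¹ * ∑ j, l (w i).2 (w j).1))
      simpa [one_pow, one_mul, Finset.sum_const, Finset.card_univ,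
        Fintype.card_fin, nsmul_eq_mul, mul_one] using h
    calc (∏ i, l (w i).2 (w i).1) *
        (((n + 1 : ℕ) : ℝ)⁻¹ * ∑ i, (Real.log (∫ θ', l (w i).2 θ' ∂Pθ) -
          Real.log (((n + 1 : ℕ) : ℝ)⁻¹ * ∑ j, l (w i).2 (w j).1))) ^ 2
        = (((n + 1 : ℕ) : ℝ)⁻¹) ^ 2 * ((∏ i, l (w i).2 (w i).1) *
            (∑ i, (Real.log (∫ θ', l (w i).2 θ' ∂Pθ) -
              Real.log (((n + 1 : ℕ) : ℝ)⁻¹ * ∑ j, l (w i).2 (w j).1))) ^ 2) := by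
          ring
      _ ≤ (((n + 1 : ℕ) : ℝ)⁻¹) ^ 2 * ((∏ i, l (w i).2 (w i).1) *
            (((n + 1 : ℕ) : ℝ) * ∑ i, (Real.log (∫ θ', l (w i).2 θ' ∂Pθ) -
              Real.log (((n + 1 : ℕ) : ℝ)⁻¹ * ∑ j, l (w i).2 (w j).1)) ^ 2)) := by
          exact mul_le_mul_of_nonneg_left
            (mul_le_mul_of_nonneg_left hsq (hρpos w)) (by positivity)
      _ = ((n + 1 : ℕ) : ℝ)⁻¹ * ∑ i, ((∏ m, l (w m).2 (w m).1) *
            (Real.log (∫ θ', l (w i).2 θ' ∂Pθ) -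
              Real.log (((n + 1 : ℕ) : ℝ)⁻¹ * ∑ j, l (w i).2 (w j).1)) ^ 2) := by
          rw [show ((((n + 1 : ℕ) : ℝ)⁻¹) ^ 2 * ((∏ i, l (w i).2 (w i).1) *
              (((n + 1 : ℕ) : ℝ) * ∑ i, (Real.log (∫ θ', l (w i).2 θ' ∂Pθ) -
                Real.log (((n + 1 : ℕ) : ℝ)⁻¹ * ∑ j, l (w i).2 (w j).1)) ^ 2)))
              = ((n + 1 : ℕ) : ℝ)⁻¹ * ((∏ i, l (w i).2 (w i).1) *
                ∑ i, (Real.log (∫ θ', l (w i).2 θ' ∂Pθ) -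
                  Real.log (((n + 1 : ℕ) : ℝ)⁻¹ * ∑ j, l (w i).2 (w j).1)) ^ 2)
            from by field_simp]
          rw [Finset.mul_sum]
      _ ≤ ((n + 1 : ℕ) : ℝ)⁻¹ * ∑ i, (C₁ ^ 2)⁻¹ *
            ((∏ m, l (w m).2 (w m).1) *
              (((n + 1 : ℕ) : ℝ)⁻¹ *
                ∑ j, (l (w i).2 (w j).1 - ∫ θ', l (w i).2 θ' ∂Pθ)) ^ 2) := by
          refine mul_le_mul_of_nonneg_left
            (Finset.sum_le_sum fun i _ => ?_) (by positivity)
          calc (∏ m, l (w m).2 (w m).1) *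
              (Real.log (∫ θ', l (w i).2 θ' ∂Pθ) -
                Real.log (((n + 1 : ℕ) : ℝ)⁻¹ * ∑ j, l (w i).2 (w j).1)) ^ 2
              ≤ (∏ m, l (w m).2 (w m).1) * ((C₁ ^ 2)⁻¹ *
                (((n + 1 : ℕ) : ℝ)⁻¹ *
                  ∑ j, (l (w i).2 (w j).1 - ∫ θ', l (w i).2 θ' ∂Pθ)) ^ 2) :=
                mul_le_mul_of_nonneg_left (ha2 w i) (hρpos w)
            _ = (C₁ ^ 2)⁻¹ * ((∏ m, l (w m).2 (w m).1) *
                (((n + 1 : ℕ) : ℝ)⁻¹ *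
                  ∑ j, (l (w i).2 (w j).1 - ∫ θ', l (w i).2 θ' ∂Pθ)) ^ 2) := by
                ring
  have int_ρH : ∀ i : Fin (n + 1), Integrable
      (fun w : Fin (n + 1) → Θ × Y => (∏ m, l (w m).2 (w m).1) *
        (((n + 1 : ℕ) : ℝ)⁻¹ *
          ∑ j, (l (w i).2 (w j).1 - ∫ θ', l (w i).2 θ' ∂Pθ)) ^ 2)
      (Measure.pi fun _ : Fin (n + 1) => Pθ.prod ν) := by
    intro i
    refine intbleP _ (hρm.mul ((hmeas_hi i).pow_const 2))
      (C₂ ^ (n + 1) * (C₂ - C₁) ^ 2) fun w => ?_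
    rw [abs_mul]
    refine mul_le_mul (hρb w) ?_ (abs_nonneg _) (by positivity)
    rw [abs_pow]
    exact pow_le_pow_left₀ (abs_nonneg _) (hhib w i) 2
  have int2' : Integrable (fun w : Fin (n + 1) → Θ × Y =>
      ((n + 1 : ℕ) : ℝ)⁻¹ * ∑ i, (C₁ ^ 2)⁻¹ *
        ((∏ m, l (w m).2 (w m).1) *
          (((n + 1 : ℕ) : ℝ)⁻¹ *
            ∑ j, (l (w i).2 (w j).1 - ∫ θ', l (w i).2 θ' ∂Pθ)) ^ 2))
      (Measure.pi fun _ : Fin (n + 1) => Pθ.prod ν) :=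
    (integrable_finset_sum _ fun i _ => (int_ρH i).const_mul _).const_mul _
  have hE2le : (∫ w : Fin (n + 1) → Θ × Y,
      (∏ i, l (w i).2 (w i).1) *
        (((n + 1 : ℕ) : ℝ)⁻¹ * ∑ i, (Real.log (∫ θ', l (w i).2 θ' ∂Pθ) -
          Real.log (((n + 1 : ℕ) : ℝ)⁻¹ * ∑ j, l (w i).2 (w j).1))) ^ 2
      ∂(Measure.pi fun _ : Fin (n + 1) => Pθ.prod ν))
      ≤ ((C₂ - C₁) ^ 2 / C₁ ^ 2) / ((n + 1 : ℕ) : ℝ) := by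
    calc (∫ w : Fin (n + 1) → Θ × Y,
        (∏ i, l (w i).2 (w i).1) *
          (((n + 1 : ℕ) : ℝ)⁻¹ * ∑ i, (Real.log (∫ θ', l (w i).2 θ' ∂Pθ) -
            Real.log (((n + 1 : ℕ) : ℝ)⁻¹ * ∑ j, l (w i).2 (w j).1))) ^ 2
        ∂(Measure.pi fun _ : Fin (n + 1) => Pθ.prod ν))
        ≤ ∫ w : Fin (n + 1) → Θ × Y,
            ((n + 1 : ℕ) : ℝ)⁻¹ * ∑ i, (C₁ ^ 2)⁻¹ *
              ((∏ m, l (w m).2 (w m).1) *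
                (((n + 1 : ℕ) : ℝ)⁻¹ *
                  ∑ j, (l (w i).2 (w j).1 - ∫ θ', l (w i).2 θ' ∂Pθ)) ^ 2)
            ∂(Measure.pi fun _ : Fin (n + 1) => Pθ.prod ν) :=
          integral_mono int2 int2' hBpt
      _ = ((n + 1 : ℕ) : ℝ)⁻¹ * ∑ i, ∫ w : Fin (n + 1) → Θ × Y,
            (C₁ ^ 2)⁻¹ * ((∏ m, l (w m).2 (w m).1) *
              (((n + 1 : ℕ) : ℝ)⁻¹ *
                ∑ j, (l (w i).2 (w j).1 - ∫ θ', l (w i).2 θ' ∂Pθ)) ^ 2)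
            ∂(Measure.pi fun _ : Fin (n + 1) => Pθ.prod ν) := by
          rw [integral_const_mul,
            integral_finset_sum _ (fun i _ => (int_ρH i).const_mul _)]
      _ ≤ ((n + 1 : ℕ) : ℝ)⁻¹ * ∑ _i : Fin (n + 1),
            (C₁ ^ 2)⁻¹ * ((C₂ - C₁) ^ 2 / ((n + 1 : ℕ) : ℝ)) := by
          refine mul_le_mul_of_nonneg_left
            (Finset.sum_le_sum fun i _ => ?_) (by positivity)
          rw [integral_const_mul]
          refine mul_le_mul_of_nonneg_left ?_ (by positivity)
          exact aux_partB (Pθ.prod ν) (fun z : Θ × Y => l z.2 z.1) hml hL1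
            (fun z => (hlpos z.2 z.1).le) C₂ hlabs
            (fun z x => l z.2 x.1 - ∫ θ', l z.2 θ' ∂Pθ) hhm (C₂ - C₁)
            (by linarith) hhb hmean n i
      _ = ((C₂ - C₁) ^ 2 / C₁ ^ 2) / ((n + 1 : ℕ) : ℝ) := by
          rw [Finset.sum_const, Finset.card_univ, Fintype.card_fin, nsmul_eq_mul,
            ← mul_assoc, inv_mul_cancel₀ hcard, one_mul]
          field_simp
  refine le_trans (add_le_add
    (mul_le_mul_of_nonneg_left hE1le (by norm_num))
    (mul_le_mul_of_nonneg_left hE2le (by norm_num))) (le_of_eq (by ring))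
end

section
/- The srNMC estimator is deterministically bounded above by log M: for any samples, Û^M_srNMC(λ) = (1/M) Σ_{i=1}^M log[ l(y^(i)|θ^(i),λ) / ((1/M) Σ_{j=1}^M l(y^(i)|θ^(j),λ)) ] ≤ log M. -/
open Real

/-- The srNMC estimator is deterministically bounded above by `log M`:
for any samples `θⁱ` with observations `yⁱ` and positive likelihood `l`,
`(1/M) Σᵢ log[ l(yⁱ|θⁱ) / ((1/M) Σⱼ l(yⁱ|θʲ)) ] ≤ log M`. -/
theorem srNMC_le_log_M
    {Θ Y : Type*} (l : Y → Θ → ℝ) (hl : ∀ y θ, 0 < l y θ)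
    (M : ℕ) (hM : 1 ≤ M) (θs : Fin M → Θ) (ys : Fin M → Y) :
    (M : ℝ)⁻¹ * ∑ i, Real.log (l (ys i) (θs i) /
        ((M : ℝ)⁻¹ * ∑ j, l (ys i) (θs j))) ≤ Real.log M := by
  have hMpos : (0:ℝ) < M := by exact_mod_cast hM
  have hterm : ∀ i : Fin M, Real.log (l (ys i) (θs i) /
      ((M : ℝ)⁻¹ * ∑ j, l (ys i) (θs j))) ≤ Real.log M := by
    intro i
    have hsum : l (ys i) (θs i) ≤ ∑ j, l (ys i) (θs j) :=
      Finset.single_le_sum (fun j _ => (hl (ys i) (θs j)).le) (Finset.mem_univ i)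
    have hsumpos : 0 < ∑ j, l (ys i) (θs j) :=
      Finset.sum_pos (fun j _ => hl (ys i) (θs j)) ⟨i, Finset.mem_univ i⟩
    have hdenpos : 0 < (M : ℝ)⁻¹ * ∑ j, l (ys i) (θs j) :=
      mul_pos (inv_pos.mpr hMpos) hsumpos
    have hle : l (ys i) (θs i) / ((M : ℝ)⁻¹ * ∑ j, l (ys i) (θs j)) ≤ M := by
      rw [div_le_iff₀ hdenpos]
      calc l (ys i) (θs i) ≤ ∑ j, l (ys i) (θs j) := hsum
        _ = (M:ℝ) * ((M : ℝ)⁻¹ * ∑ j, l (ys i) (θs j)) := by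
            field_simp
    exact Real.log_le_log (div_pos (hl _ _) hdenpos) hle
  calc (M : ℝ)⁻¹ * ∑ i, Real.log (l (ys i) (θs i) /
        ((M : ℝ)⁻¹ * ∑ j, l (ys i) (θs j)))
      ≤ (M : ℝ)⁻¹ * ∑ _i : Fin M, Real.log M := by
        exact mul_le_mul_of_nonneg_left
          (Finset.sum_le_sum (fun i _ => hterm i)) (inv_nonneg.mpr hMpos.le)
    _ = Real.log M := by
        rw [Finset.sum_const, Finset.card_univ, Fintype.card_fin, nsmul_eq_mul]
        field_simp
end
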